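/- arXiv:2308.09131 — 7 statements merged into one kernel-verified Lean document; each statement's English description precedes it below -/
import Mathlib

section
/- Suppose an operator f on ℂ^G ⊗ ℂ^n satisfies 𝐔^{g_i,g_j} f (𝐔^{g_i,g_j})† = (Y ⊗ Z)† f (Y ⊗ Z) for some frame orientations g_i, g_j ∈ G and some unitaries Y on ℂ^G and Z on ℂ^n. Then for arbitrary orientations g_i', g_j' ∈ G one has 𝐔^{g_i',g_j'} f (𝐔^{g_i',g_j'})† = (Y' ⊗ Z')† f (Y' ⊗ Z'), where Y' = Y · L_{(g_i' g_j')⁻¹ g_i g_j} and Z' = Z · U_S(g_j (g_j')⁻¹). -/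
open Matrix Kronecker

variable {G : Type*} [Fintype G] [CommGroup G] [DecidableEq G] {n : ℕ}

/-- The QRF-transformation unitary `𝐔^{g_i,g_j} = Σ_g |g g_i⟩⟨g_j g⁻¹| ⊗ U_S(g)`
on `ℂ^G ⊗ ℂ^n`. -/
noncomputable def Uqrf (U : G →* Matrix.unitaryGroup (Fin n) ℂ) (gi gj : G) :
    Matrix (G × Fin n) (G × Fin n) ℂ :=
  ∑ g : G, Matrix.single (g * gi) (gj * g⁻¹) (1 : ℂ) ⊗ₖ
    (U g : Matrix (Fin n) (Fin n) ℂ)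

/-- The left-translation permutation unitary `L_g` on `ℂ^G`, with `L_g |g'⟩ = |g g'⟩`. -/
noncomputable def Lmat (g : G) : Matrix G G ℂ :=
  Matrix.of fun a b => if a = g * b then 1 else 0

lemma Lmat_mul_apply (c : G) (M : Matrix G G ℂ) (a b : G) :
    (Lmat c * M) a b = M (c⁻¹ * a) b := by
  simp only [Matrix.mul_apply, Lmat, Matrix.of_apply, ite_mul, one_mul, zero_mul]
  have h : ∀ m : G, (a = c * m) = (m = c⁻¹ * a) := by
    intro m
    rw [eq_comm, eq_inv_mul_iff_mul_eq]; exact propext eq_comm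
  simp only [h, Finset.sum_ite_eq' Finset.univ, Finset.mem_univ, if_true]

lemma Lmat_mul_std (c x y : G) :
    Lmat c * Matrix.single x y (1:ℂ) = Matrix.single (c*x) y 1 := by
  ext a b
  rw [Lmat_mul_apply]
  simp only [Matrix.single, Matrix.of_apply]
  congr 1
  simp [eq_inv_mul_iff_mul_eq, eq_comm]

lemma LmatCT (c : G) : (Lmat c)ᴴ = Lmat c⁻¹ := by
  ext a b
  simp only [Matrix.conjTranspose_apply, Lmat, Matrix.of_apply]
  by_cases hab : b = c * a
  · subst hab; simp
  · rw [if_neg hab, if_neg (fun h => hab (by rw [h]; simp)), star_zero]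

lemma kronCT {m p : Type*} (A : Matrix m m ℂ) (B : Matrix p p ℂ) :
    (A ⊗ₖ B)ᴴ = Aᴴ ⊗ₖ Bᴴ := by
  ext ⟨a,q⟩ ⟨b,r⟩
  simp [Matrix.conjTranspose_apply, Matrix.kroneckerMap_apply]

lemma starU (U : G →* Matrix.unitaryGroup (Fin n) ℂ) (g : G) :
    ((U g : Matrix (Fin n) (Fin n) ℂ))ᴴ = (U g⁻¹ : Matrix (Fin n) (Fin n) ℂ) := by
  rw [map_inv]
  rfl

lemma Uqrf_shift (U : G →* Matrix.unitaryGroup (Fin n) ℂ) (gi gj gi' gj' : G) :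
    Uqrf U gi' gj' =
      (Lmat ((gi*gj)⁻¹*(gi'*gj')) ⊗ₖ (U (gj'*gj⁻¹) : Matrix (Fin n) (Fin n) ℂ)) *
        Uqrf U gi gj := by
  unfold Uqrf
  rw [Finset.mul_sum]
  refine (Fintype.sum_equiv (Equiv.mulLeft (gj'*gj⁻¹)) _ _ fun g => ?_).symm
  rw [← Matrix.mul_kronecker_mul, Lmat_mul_std]
  have hcoe : ((U (gj'*gj⁻¹) : Matrix (Fin n) (Fin n) ℂ)) * (U g : Matrix (Fin n) (Fin n) ℂ)
      = (U (gj'*gj⁻¹ * g) : Matrix (Fin n) (Fin n) ℂ) := by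
    rw [show gj'*gj⁻¹*g = (gj'*gj⁻¹)*g from rfl, _root_.map_mul U (gj'*gj⁻¹) g]; rfl
  rw [hcoe]
  have h1 : (gi*gj)⁻¹*(gi'*gj') * (g * gi) = (Equiv.mulLeft (gj'*gj⁻¹)) g * gi' := by
    simp only [Equiv.coe_mulLeft]
    rw [← Additive.ofMul.apply_eq_iff_eq]
    simp only [ofMul_mul, ofMul_inv]
    abel
  have h2 : gj * g⁻¹ = gj' * ((Equiv.mulLeft (gj'*gj⁻¹)) g)⁻¹ := by
    simp only [Equiv.coe_mulLeft]
    rw [← Additive.ofMul.apply_eq_iff_eq]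
    simp only [ofMul_mul, ofMul_inv]
    abel
  rw [h1, h2]
  rfl

/-- If `f` is invariant up to the bilocal unitary `Y ⊗ Z` under the QRF
transformation with orientations `g_i, g_j`, then for arbitrary orientations `g_i', g_j'`
it is invariant up to `Y' ⊗ Z'` with `Y' = Y·L_{(g_i'g_j')⁻¹ g_i g_j}` and
`Z' = Z·U_S(g_j g_j'⁻¹)`. -/
theorem AX_mem_all_orientations (hn : 1 ≤ n)
    (U : G →* Matrix.unitaryGroup (Fin n) ℂ) (gi gj : G)
    (Y : Matrix G G ℂ) (hY : Y ∈ Matrix.unitaryGroup G ℂ)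
    (Z : Matrix (Fin n) (Fin n) ℂ) (hZ : Z ∈ Matrix.unitaryGroup (Fin n) ℂ)
    (f : Matrix (G × Fin n) (G × Fin n) ℂ)
    (hf : Uqrf U gi gj * f * (Uqrf U gi gj)ᴴ = (Y ⊗ₖ Z)ᴴ * f * (Y ⊗ₖ Z)) :
    ∀ gi' gj' : G,
      Uqrf U gi' gj' * f * (Uqrf U gi' gj')ᴴ =
        ((Y * Lmat ((gi' * gj')⁻¹ * (gi * gj))) ⊗ₖ
            (Z * (U (gj * gj'⁻¹) : Matrix (Fin n) (Fin n) ℂ)))ᴴ * f *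
          ((Y * Lmat ((gi' * gj')⁻¹ * (gi * gj))) ⊗ₖ
            (Z * (U (gj * gj'⁻¹) : Matrix (Fin n) (Fin n) ℂ))) := by
  intro gi' gj'
  set c : G := (gi*gj)⁻¹*(gi'*gj') with hc
  set d : G := gj'*gj⁻¹ with hd
  set W : Matrix (G × Fin n) (G × Fin n) ℂ :=
    Lmat c ⊗ₖ (U d : Matrix (Fin n) (Fin n) ℂ) with hW
  have key : Uqrf U gi' gj' = W * Uqrf U gi gj := Uqrf_shift U gi gj gi' gj'
  have harg1 : (gi' * gj')⁻¹ * (gi * gj) = c⁻¹ := by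
    rw [← Additive.ofMul.apply_eq_iff_eq]
    simp only [ofMul_mul, ofMul_inv, hc]
    abel
  have harg2 : gj * gj'⁻¹ = d⁻¹ := by
    rw [← Additive.ofMul.apply_eq_iff_eq]
    simp only [ofMul_mul, ofMul_inv, hd]
    abel
  have hWH : Wᴴ = Lmat c⁻¹ ⊗ₖ (U d⁻¹ : Matrix (Fin n) (Fin n) ℂ) := by
    rw [hW, kronCT, LmatCT, starU]
  have hM : (Y * Lmat ((gi' * gj')⁻¹ * (gi * gj))) ⊗ₖ
      (Z * (U (gj * gj'⁻¹) : Matrix (Fin n) (Fin n) ℂ)) = (Y ⊗ₖ Z) * Wᴴ := by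
    rw [harg1, harg2, hWH, Matrix.mul_kronecker_mul]
  rw [key, hM]
  rw [Matrix.conjTranspose_mul, Matrix.conjTranspose_mul]
  calc W * Uqrf U gi gj * f * ((Uqrf U gi gj)ᴴ * Wᴴ)
      = W * (Uqrf U gi gj * f * (Uqrf U gi gj)ᴴ) * Wᴴ := by
        simp only [mul_assoc]
    _ = W * ((Y ⊗ₖ Z)ᴴ * f * (Y ⊗ₖ Z)) * Wᴴ := by rw [hf]
    _ = Wᴴᴴ * (Y ⊗ₖ Z)ᴴ * f * ((Y ⊗ₖ Z) * Wᴴ) := by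
        rw [Matrix.conjTranspose_conjTranspose]
        simp only [mul_assoc]
end

section
/- For any frame orientations g_i, g_j ∈ G, let 𝐔̂ denote the conjugation superoperator 𝐔̂(f) := 𝐔 f 𝐔†. Then, as superoperators on operators of ℂ^G ⊗ ℂ^n: 𝐔̂ ∘ Π_t = Π_t ∘ 𝐔̂, 𝐔̂ ∘ Π_d = Π_d ∘ 𝐔̂, and Π_t ∘ Π_d = Π_d ∘ Π_t. -/
open Matrix Kronecker

variable {G : Type*} [Fintype G] [CommGroup G] [DecidableEq G] {n : ℕ}

/-- The `G`-twirl superoperator over system translations. -/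
noncomputable def Pit (U : G →* Matrix.unitaryGroup (Fin n) ℂ)
    (f : Matrix (G × Fin n) (G × Fin n) ℂ) : Matrix (G × Fin n) (G × Fin n) ℂ :=
  (Fintype.card G : ℂ)⁻¹ • ∑ g : G,
    ((1 : Matrix G G ℂ) ⊗ₖ (U g : Matrix (Fin n) (Fin n) ℂ)) * f *
      ((1 : Matrix G G ℂ) ⊗ₖ (U g : Matrix (Fin n) (Fin n) ℂ))ᴴ

/-- The frame-diagonalising superoperator. -/
noncomputable def Pid (f : Matrix (G × Fin n) (G × Fin n) ℂ) :
    Matrix (G × Fin n) (G × Fin n) ℂ :=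
  ∑ g : G,
    (Matrix.single g g (1 : ℂ) ⊗ₖ (1 : Matrix (Fin n) (Fin n) ℂ)) * f *
      (Matrix.single g g (1 : ℂ) ⊗ₖ (1 : Matrix (Fin n) (Fin n) ℂ))

set_option linter.unreachableTactic false
set_option linter.unusedTactic false
set_option linter.unusedSectionVars false
set_option linter.unusedVariables false

lemma kronCT_s4 (A : Matrix G G ℂ) (B : Matrix (Fin n) (Fin n) ℂ) :
    (A ⊗ₖ B)ᴴ = Aᴴ ⊗ₖ Bᴴ := by
  ext ⟨i, j⟩ ⟨k, l⟩
  simp [conjTranspose_apply, mul_comm]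

lemma stdCT (g : G) : (Matrix.single g g (1 : ℂ))ᴴ = Matrix.single g g 1 := by
  ext i j
  simp [conjTranspose_apply, Matrix.single, and_comm]

lemma commUt (U : G →* Matrix.unitaryGroup (Fin n) ℂ) (gi gj h : G) :
    Uqrf U gi gj * ((1 : Matrix G G ℂ) ⊗ₖ (U h : Matrix (Fin n) (Fin n) ℂ)) =
      ((1 : Matrix G G ℂ) ⊗ₖ (U h : Matrix (Fin n) (Fin n) ℂ)) * Uqrf U gi gj := by
  unfold Uqrf
  rw [Finset.sum_mul, Finset.mul_sum]
  refine Finset.sum_congr rfl fun g _ => ?_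
  rw [← Matrix.mul_kronecker_mul, ← Matrix.mul_kronecker_mul, one_mul, mul_one]
  have : (U g : Matrix (Fin n) (Fin n) ℂ) * U h = (U h : Matrix (Fin n) (Fin n) ℂ) * U g := by
    rw [← MulMemClass.coe_mul, ← MulMemClass.coe_mul, ← _root_.map_mul, ← _root_.map_mul,
      mul_comm]
  rw [this]

lemma commPd (U : G →* Matrix.unitaryGroup (Fin n) ℂ) (gi gj g : G) :
    Uqrf U gi gj *
        (Matrix.single g g (1 : ℂ) ⊗ₖ (1 : Matrix (Fin n) (Fin n) ℂ)) =
      (Matrix.single (g⁻¹ * gj * gi) (g⁻¹ * gj * gi) (1 : ℂ) ⊗ₖ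
          (1 : Matrix (Fin n) (Fin n) ℂ)) * Uqrf U gi gj := by
  unfold Uqrf
  rw [Finset.sum_mul, Finset.mul_sum]
  rw [Finset.sum_eq_single (g⁻¹ * gj), Finset.sum_eq_single (g⁻¹ * gj)]
  · rw [← Matrix.mul_kronecker_mul, ← Matrix.mul_kronecker_mul, one_mul, mul_one]
    have h1 : gj * (g⁻¹ * gj)⁻¹ = g := by group
    rw [h1]
    simp
  · intro b _ hb
    rw [← Matrix.mul_kronecker_mul]
    rw [Matrix.single_mul_single_of_ne, Matrix.zero_kronecker]
    intro hbg
    apply hb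
    first
      | exact mul_right_cancel hbg.symm
      | (rw [← hbg]; group)
  · intro h; exact absurd (Finset.mem_univ _) h
  · intro b _ hb
    rw [← Matrix.mul_kronecker_mul]
    rw [Matrix.single_mul_single_of_ne, Matrix.zero_kronecker]
    intro hbg
    apply hb
    first
      | exact mul_right_cancel hbg.symm
      | (rw [← hbg]; group)
  · intro h; exact absurd (Finset.mem_univ _) h

lemma hP (h : G) :
    ((Matrix.single h h (1 : ℂ)) ⊗ₖ (1 : Matrix (Fin n) (Fin n) ℂ))ᴴ =
      (Matrix.single h h (1 : ℂ)) ⊗ₖ (1 : Matrix (Fin n) (Fin n) ℂ) := by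
  rw [kronCT_s4, stdCT, conjTranspose_one]

lemma kcomm (h : G) (A : Matrix (Fin n) (Fin n) ℂ) :
    (Matrix.single h h (1 : ℂ) ⊗ₖ (1 : Matrix (Fin n) (Fin n) ℂ)) *
        ((1 : Matrix G G ℂ) ⊗ₖ A) =
      ((1 : Matrix G G ℂ) ⊗ₖ A) *
        (Matrix.single h h (1 : ℂ) ⊗ₖ (1 : Matrix (Fin n) (Fin n) ℂ)) := by
  rw [← Matrix.mul_kronecker_mul, ← Matrix.mul_kronecker_mul, one_mul, mul_one, one_mul, mul_one]

lemma swap_sandwich {m : Type*} [Fintype m] (Uq W W' V V' f : Matrix m m ℂ)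
    (h1 : Uq * W = W' * Uq) (h2 : V * Uqᴴ = Uqᴴ * V') :
    Uq * (W * f * V) * Uqᴴ = W' * (Uq * f * Uqᴴ) * V' := by
  have e : Uq * (W * f * V) * Uqᴴ = Uq * W * (f * (V * Uqᴴ)) := by simp only [mul_assoc]
  rw [e, h1, h2]
  simp only [mul_assoc]


/-- The conjugation superoperator `𝐔̂(f) = 𝐔 f 𝐔†` commutes with both
projectors `Π_t` and `Π_d`, and the two projectors commute with each other. -/
theorem Uhat_commutes_with_Pit_Pid (hn : 1 ≤ n)
    (U : G →* Matrix.unitaryGroup (Fin n) ℂ) (gi gj : G) :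
    (∀ f : Matrix (G × Fin n) (G × Fin n) ℂ,
        Uqrf U gi gj * Pit U f * (Uqrf U gi gj)ᴴ =
          Pit U (Uqrf U gi gj * f * (Uqrf U gi gj)ᴴ)) ∧
      (∀ f : Matrix (G × Fin n) (G × Fin n) ℂ,
        Uqrf U gi gj * Pid f * (Uqrf U gi gj)ᴴ =
          Pid (Uqrf U gi gj * f * (Uqrf U gi gj)ᴴ)) ∧
      (∀ f : Matrix (G × Fin n) (G × Fin n) ℂ, Pit U (Pid f) = Pid (Pit U f)) := by
  refine ⟨fun f => ?_, fun f => ?_, fun f => ?_⟩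
  · unfold Pit
    rw [Matrix.mul_smul, Matrix.smul_mul]
    congr 1
    rw [Finset.mul_sum, Finset.sum_mul]
    refine Finset.sum_congr rfl fun g _ => ?_
    have h1 := commUt U gi gj g
    have h2 : ((1 : Matrix G G ℂ) ⊗ₖ (U g : Matrix (Fin n) (Fin n) ℂ))ᴴ * (Uqrf U gi gj)ᴴ =
        (Uqrf U gi gj)ᴴ * ((1 : Matrix G G ℂ) ⊗ₖ (U g : Matrix (Fin n) (Fin n) ℂ))ᴴ := by
      rw [← conjTranspose_mul, ← conjTranspose_mul, h1]
    exact swap_sandwich _ _ _ _ _ _ h1 h2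
  · unfold Pid
    rw [Finset.mul_sum, Finset.sum_mul]
    have key : ∀ g : G,
        Uqrf U gi gj *
            ((Matrix.single g g (1 : ℂ) ⊗ₖ (1 : Matrix (Fin n) (Fin n) ℂ)) * f *
              (Matrix.single g g (1 : ℂ) ⊗ₖ (1 : Matrix (Fin n) (Fin n) ℂ))) *
            (Uqrf U gi gj)ᴴ =
          (Matrix.single (g⁻¹ * gj * gi) (g⁻¹ * gj * gi) (1 : ℂ) ⊗ₖ
              (1 : Matrix (Fin n) (Fin n) ℂ)) *
            (Uqrf U gi gj * f * (Uqrf U gi gj)ᴴ) *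
            (Matrix.single (g⁻¹ * gj * gi) (g⁻¹ * gj * gi) (1 : ℂ) ⊗ₖ
              (1 : Matrix (Fin n) (Fin n) ℂ)) := by
      intro g
      have h1 := commPd U gi gj g
      have h2 : (Matrix.single g g (1 : ℂ) ⊗ₖ (1 : Matrix (Fin n) (Fin n) ℂ)) *
          (Uqrf U gi gj)ᴴ = (Uqrf U gi gj)ᴴ *
            (Matrix.single (g⁻¹ * gj * gi) (g⁻¹ * gj * gi) (1 : ℂ) ⊗ₖ
              (1 : Matrix (Fin n) (Fin n) ℂ)) := by
        rw [← hP g, ← conjTranspose_mul, h1, conjTranspose_mul, hP]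
      exact swap_sandwich _ _ _ _ _ _ h1 h2
    rw [Finset.sum_congr rfl fun g _ => key g]
    exact Fintype.sum_equiv ((Equiv.inv G).trans (Equiv.mulRight (gj * gi))) _ _
      (fun g => by simp [mul_assoc])
  · unfold Pit Pid
    simp only [Matrix.mul_smul, Matrix.smul_mul]
    rw [← Finset.smul_sum]
    congr 1
    simp only [Finset.mul_sum, Finset.sum_mul]
    rw [Finset.sum_comm]
    refine Finset.sum_congr rfl fun g _ => Finset.sum_congr rfl fun h _ => ?_
    have h1 : ((1 : Matrix G G ℂ) ⊗ₖ (U h : Matrix (Fin n) (Fin n) ℂ)) *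
        (Matrix.single g g (1 : ℂ) ⊗ₖ (1 : Matrix (Fin n) (Fin n) ℂ)) =
        (Matrix.single g g (1 : ℂ) ⊗ₖ (1 : Matrix (Fin n) (Fin n) ℂ)) *
        ((1 : Matrix G G ℂ) ⊗ₖ (U h : Matrix (Fin n) (Fin n) ℂ)) :=
      (kcomm g _).symm
    have h2 : (Matrix.single g g (1 : ℂ) ⊗ₖ (1 : Matrix (Fin n) (Fin n) ℂ)) *
        ((1 : Matrix G G ℂ) ⊗ₖ (U h : Matrix (Fin n) (Fin n) ℂ))ᴴ =
        ((1 : Matrix G G ℂ) ⊗ₖ (U h : Matrix (Fin n) (Fin n) ℂ))ᴴ *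
        (Matrix.single g g (1 : ℂ) ⊗ₖ (1 : Matrix (Fin n) (Fin n) ℂ)) := by
      rw [kronCT_s4, conjTranspose_one]
      exact kcomm g _
    exact swap_sandwich _ _ _ _ _ _ h1 h2
end

section
/- Assume that for every h ∈ G with h ≠ e, the unitary U_S(h) is not a complex scalar multiple of the identity 1_n. Let f be a G×G complex matrix. The following are equivalent: (a) there exist frame orientations g_i, g_j ∈ G and un30itaries Y on ℂ^G, Z on ℂ^n such that 𝐔^{g_i,g_j} (f ⊗ 1_n) (𝐔^{g_i,g_j})† = (Y ⊗ Z)† (f ⊗ 1_n) (Y ⊗ Z); (b) f is diagonal in the group basis, i.e. ⟨g|f|g'⟩ = 0 whenever g ≠ g'. Moreover, when f is diagonal, then for any orientations g_i, g_j ∈ G and any bilocal unitary X = Y ⊗ Z the membership f ⊗ 1_n ∈ 𝒜^X holds if and only if Y† f Y = P f P† (with Z arbitrary), where P = P^{g_i,g_j} is the parity-swap unitary. -/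
open Matrix Kronecker

variable {G : Type*} [Fintype G] [CommGroup G] [DecidableEq G] {n : ℕ}

/-- The parity-swap unitary `P^{g_i,g_j} = Σ_g |g_i g⟩⟨g_j g⁻¹|` on `ℂ^G`. -/
noncomputable def Pswap (gi gj : G) : Matrix G G ℂ :=
  ∑ g : G, Matrix.single (gi * g) (gj * g⁻¹) (1 : ℂ)

lemma Uqrf_apply (U : G →* Matrix.unitaryGroup (Fin n) ℂ) (gi gj a b : G) (s t : Fin n) :
    Uqrf U gi gj (a, s) (b, t) =
      if b = gj * gi * a⁻¹ then (U (a * gi⁻¹) : Matrix (Fin n) (Fin n) ℂ) s t else 0 := by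
  unfold Uqrf
  rw [Matrix.sum_apply]
  rw [Finset.sum_eq_single (a * gi⁻¹)]
  · simp only [Matrix.kroneckerMap_apply, Matrix.single, Matrix.of_apply,
      inv_mul_cancel_right, _root_.mul_inv_rev, inv_inv, true_and]
    simp [eq_comm, mul_assoc, mul_comm, mul_left_comm]
  · intro g _ hg
    simp only [Matrix.kroneckerMap_apply, Matrix.single, Matrix.of_apply]
    rw [if_neg, zero_mul]
    rintro ⟨h1, -⟩
    exact hg (by rw [← h1]; group)
  · simp

lemma Pswap_apply (gi gj a b : G) :
    Pswap gi gj a b = if b = gj * gi * a⁻¹ then 1 else 0 := by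
  unfold Pswap
  rw [Matrix.sum_apply]
  rw [Finset.sum_eq_single (gi⁻¹ * a)]
  · simp only [Matrix.single, Matrix.of_apply, mul_inv_cancel_left,
      _root_.mul_inv_rev, inv_inv, true_and]
    simp [eq_comm, mul_assoc, mul_comm, mul_left_comm]
  · intro g _ hg
    simp only [Matrix.single, Matrix.of_apply]
    rw [if_neg]
    rintro ⟨h1, -⟩
    exact hg (by rw [← h1]; group)
  · simp

lemma coeU_mul_star (U : G →* Matrix.unitaryGroup (Fin n) ℂ) (x y : G) :
    (U x : Matrix (Fin n) (Fin n) ℂ) * (U y : Matrix (Fin n) (Fin n) ℂ)ᴴ =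
      (U (x * y⁻¹) : Matrix (Fin n) (Fin n) ℂ) := by
  rw [_root_.map_mul, map_inv]; rfl

lemma key_entry (U : G →* Matrix.unitaryGroup (Fin n) ℂ) (gi gj : G) (f : Matrix G G ℂ)
    (a b : G) (s t : Fin n) :
    (Uqrf U gi gj * (f ⊗ₖ (1 : Matrix (Fin n) (Fin n) ℂ)) * (Uqrf U gi gj)ᴴ) (a, s) (b, t) =
      f (gj * gi * a⁻¹) (gj * gi * b⁻¹) * (U (a * b⁻¹) : Matrix (Fin n) (Fin n) ℂ) s t := by
  have L1 : ∀ d v, (Uqrf U gi gj * (f ⊗ₖ (1 : Matrix (Fin n) (Fin n) ℂ))) (a, s) (d, v) =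
      f (gj * gi * a⁻¹) d * (U (a * gi⁻¹) : Matrix (Fin n) (Fin n) ℂ) s v := by
    intro d v
    rw [Matrix.mul_apply, Fintype.sum_prod_type]
    simp [Uqrf_apply, Matrix.one_apply, ite_mul, mul_ite, Finset.sum_ite_eq,
      Finset.sum_ite_eq', mul_comm]
  rw [Matrix.mul_apply, Fintype.sum_prod_type]
  simp only [L1, Matrix.conjTranspose_apply, Uqrf_apply]
  simp only [apply_ite (star : ℂ → ℂ), star_zero, mul_ite, mul_zero]
  rw [Finset.sum_comm]
  rw [Finset.sum_congr rfl (fun v _ => Finset.sum_eq_single (gj * gi * b⁻¹)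
    (fun d _ hd => by rw [if_neg hd]) (by simp))]
  simp only [if_true, mul_assoc, ← Finset.mul_sum]
  congr 1
  have h2 : (a * gi⁻¹) * (b * gi⁻¹)⁻¹ = a * b⁻¹ := by group
  rw [← h2, ← coeU_mul_star U (a * gi⁻¹) (b * gi⁻¹), Matrix.mul_apply]
  simp [Matrix.conjTranspose_apply]

lemma kron_conjT (Y : Matrix G G ℂ) (Z : Matrix (Fin n) (Fin n) ℂ) :
    (Y ⊗ₖ Z)ᴴ = Yᴴ ⊗ₖ Zᴴ := by
  ext ⟨a, s⟩ ⟨b, t⟩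
  simp [Matrix.conjTranspose_apply, Matrix.kroneckerMap_apply, star_mul', mul_comm]

lemma rhs_eq (Y : Matrix G G ℂ) (Z : Matrix (Fin n) (Fin n) ℂ)
    (hZ : Z ∈ Matrix.unitaryGroup (Fin n) ℂ) (f : Matrix G G ℂ) :
    (Y ⊗ₖ Z)ᴴ * (f ⊗ₖ (1 : Matrix (Fin n) (Fin n) ℂ)) * (Y ⊗ₖ Z) =
      (Yᴴ * f * Y) ⊗ₖ (1 : Matrix (Fin n) (Fin n) ℂ) := by
  have hZZ : Zᴴ * Z = 1 := by
    have := (Unitary.mem_iff.mp hZ).1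
    rwa [Matrix.star_eq_conjTranspose] at this
  rw [kron_conjT, ← Matrix.mul_kronecker_mul, ← Matrix.mul_kronecker_mul,
    Matrix.mul_one, hZZ]

lemma PfP_entry (gi gj : G) (f : Matrix G G ℂ) (a b : G) :
    (Pswap gi gj * f * (Pswap gi gj)ᴴ) a b = f (gj * gi * a⁻¹) (gj * gi * b⁻¹) := by
  have h1 : ∀ d, (Pswap gi gj * f) a d = f (gj * gi * a⁻¹) d := by
    intro d
    rw [Matrix.mul_apply]
    simp [Pswap_apply, ite_mul, Finset.sum_ite_eq, Finset.sum_ite_eq']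
  rw [Matrix.mul_apply]
  simp [h1, Matrix.conjTranspose_apply, Pswap_apply, apply_ite (star : ℂ → ℂ),
    mul_ite, Finset.sum_ite_eq, Finset.sum_ite_eq']

lemma Pswap_mem (gi gj : G) : Pswap gi gj ∈ Matrix.unitaryGroup G ℂ := by
  rw [Matrix.mem_unitaryGroup_iff]
  ext a b
  rw [Matrix.star_eq_conjTranspose, Matrix.mul_apply, Matrix.one_apply]
  simp only [Matrix.conjTranspose_apply, Pswap_apply, apply_ite (star : ℂ → ℂ),
    star_zero, star_one, ite_mul, zero_mul, one_mul]
  rw [Finset.sum_eq_single (gj * gi * a⁻¹)]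
  · rw [if_pos rfl]
    by_cases hab : a = b
    · simp [hab]
    · rw [if_neg, if_neg hab]
      intro h
      exact hab (by have := mul_left_cancel h; exact inv_injective this)
  · intro d _ hd; rw [if_neg hd]
  · simp

lemma Pswap11_herm : (Pswap (1 : G) 1)ᴴ = Pswap 1 1 := by
  ext a b
  simp only [Matrix.conjTranspose_apply, Pswap_apply, one_mul, apply_ite (star : ℂ → ℂ),
    star_zero, star_one]
  by_cases h : a = b⁻¹
  · rw [if_pos h, if_pos (by rw [h]; simp)]
  · rw [if_neg h, if_neg (fun hb => h (by rw [hb]; simp))]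

lemma core (hn : 1 ≤ n) (U : G →* Matrix.unitaryGroup (Fin n) ℂ) (f : Matrix G G ℂ)
    (hdiag : ∀ g g' : G, g ≠ g' → f g g' = 0) (gi gj : G)
    (Y : Matrix G G ℂ) (Z : Matrix (Fin n) (Fin n) ℂ) (hZ : Z ∈ Matrix.unitaryGroup (Fin n) ℂ) :
    (Uqrf U gi gj * (f ⊗ₖ (1 : Matrix (Fin n) (Fin n) ℂ)) * (Uqrf U gi gj)ᴴ =
        (Y ⊗ₖ Z)ᴴ * (f ⊗ₖ (1 : Matrix (Fin n) (Fin n) ℂ)) * (Y ⊗ₖ Z)) ↔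
      Yᴴ * f * Y = Pswap gi gj * f * (Pswap gi gj)ᴴ := by
  rw [rhs_eq Y Z hZ]
  have lhs_entry : ∀ (a b : G) (s t : Fin n),
      (Uqrf U gi gj * (f ⊗ₖ (1 : Matrix (Fin n) (Fin n) ℂ)) * (Uqrf U gi gj)ᴴ) (a, s) (b, t) =
        (Pswap gi gj * f * (Pswap gi gj)ᴴ) a b * (1 : Matrix (Fin n) (Fin n) ℂ) s t := by
    intro a b s t
    rw [key_entry, PfP_entry]
    by_cases hab : a = b
    · subst hab
      rw [mul_inv_cancel, _root_.map_one]
      rfl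
    · rw [hdiag _ _ (fun h => hab (by
        have := mul_left_cancel h; exact inv_injective this)), zero_mul, zero_mul]
  constructor
  · intro hE
    ext a b
    have h2 := lhs_entry a b ⟨0, hn⟩ ⟨0, hn⟩
    rw [hE, Matrix.kronecker_apply, Matrix.one_apply_eq] at h2
    simpa using h2
  · intro hY
    ext ⟨a, s⟩ ⟨b, t⟩
    rw [lhs_entry a b s t, Matrix.kronecker_apply, hY]

/-- TPS-invariant frame operators. Assuming no nontrivial translation acts
as a scalar, a frame-local operator `f ⊗ 1_n` is invariant up to some bilocal unitary under
some QRF transformation iff `f` is diagonal in the group basis; in that case, for any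
orientations, `f ⊗ 1_n ∈ 𝒜^{Y⊗Z}` iff `Y† f Y = P f P†` (with `Z` arbitrary). -/
theorem frame_local_TPS_invariant_iff (hn : 1 ≤ n)
    (U : G →* Matrix.unitaryGroup (Fin n) ℂ)
    (hU : ∀ h : G, h ≠ 1 →
      ¬ ∃ c : ℂ, (U h : Matrix (Fin n) (Fin n) ℂ) = c • (1 : Matrix (Fin n) (Fin n) ℂ))
    (f : Matrix G G ℂ) :
    ((∃ gi gj : G, ∃ Y ∈ Matrix.unitaryGroup G ℂ, ∃ Z ∈ Matrix.unitaryGroup (Fin n) ℂ,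
        Uqrf U gi gj * (f ⊗ₖ (1 : Matrix (Fin n) (Fin n) ℂ)) * (Uqrf U gi gj)ᴴ =
          (Y ⊗ₖ Z)ᴴ * (f ⊗ₖ (1 : Matrix (Fin n) (Fin n) ℂ)) * (Y ⊗ₖ Z)) ↔
      (∀ g g' : G, g ≠ g' → f g g' = 0)) ∧
    ((∀ g g' : G, g ≠ g' → f g g' = 0) →
      ∀ gi gj : G, ∀ Y ∈ Matrix.unitaryGroup G ℂ, ∀ Z ∈ Matrix.unitaryGroup (Fin n) ℂ,
        (Uqrf U gi gj * (f ⊗ₖ (1 : Matrix (Fin n) (Fin n) ℂ)) * (Uqrf U gi gj)ᴴ =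
            (Y ⊗ₖ Z)ᴴ * (f ⊗ₖ (1 : Matrix (Fin n) (Fin n) ℂ)) * (Y ⊗ₖ Z)) ↔
          Yᴴ * f * Y = Pswap gi gj * f * (Pswap gi gj)ᴴ) := by
  constructor
  · constructor
    · rintro ⟨gi, gj, Y, hY, Z, hZ, heq⟩ g g' hgg'
      rw [rhs_eq Y Z hZ] at heq
      set a := gj * gi * g⁻¹ with ha_def
      set b := gj * gi * g'⁻¹ with hb_def
      have ha : gj * gi * a⁻¹ = g := by
        rw [ha_def]; simp [_root_.mul_inv_rev, mul_comm, mul_left_comm, mul_assoc, inv_mul_cancel_left, mul_inv_cancel_left]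
      have hb : gj * gi * b⁻¹ = g' := by
        rw [hb_def]; simp [_root_.mul_inv_rev, mul_comm, mul_left_comm, mul_assoc, inv_mul_cancel_left, mul_inv_cancel_left]
      have hab : a * b⁻¹ = g⁻¹ * g' := by
        rw [ha_def, hb_def, ← div_eq_mul_inv, mul_div_mul_comm, div_self', one_mul,
          div_eq_mul_inv, inv_inv]
      have hne : g⁻¹ * g' ≠ 1 := fun h => hgg'
        (inv_injective (mul_eq_one_iff_eq_inv.mp h))
      by_contra hf
      refine hU (g⁻¹ * g') hne ⟨(Yᴴ * f * Y) a b / f g g', ?_⟩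
      ext s t
      have hst := congrFun (congrFun heq (a, s)) (b, t)
      rw [key_entry, ha, hb, hab, Matrix.kronecker_apply] at hst
      rw [Matrix.smul_apply, smul_eq_mul, div_mul_eq_mul_div, eq_div_iff hf]
      linear_combination hst
    · intro hdiag
      refine ⟨1, 1, Pswap 1 1, Pswap_mem 1 1, 1, one_mem _, ?_⟩
      apply (core hn U f hdiag 1 1 (Pswap 1 1) 1 (one_mem _)).mpr
      rw [Pswap11_herm]
  · intro hdiag gi gj Y _ Z hZ
    exact core hn U f hdiag gi gj Y Z hZ
end

section
/- The intersection of the two relational-observable algebras describing the system relative to the two frames equals the translation-invariant system operators restricted to the physical subspace: 𝒜_{S|R₁} ∩ 𝒜_{S|R₂} = { (1_G ⊗ 1_G ⊗ f_S) · Π_phys : f_S an n×n matrix with f_S U_S(g) = U_S(g) f_S for all g ∈ G }. Moreover, if there exists h ∈ G such that U_S(h) is not a complex scalar multiple of 1_n, then 𝒜_{S|R₁} ≠ 𝒜_{S|R₂}. -/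
open Matrix Kronecker

variable {G : Type*} [Fintype G] [CommGroup G] [DecidableEq G] {n : ℕ}

/-- The coherent group-averaging projector
`Π_phys = |G|⁻¹ Σ_g L_g ⊗ L_g ⊗ U_S(g)` on `ℂ^G ⊗ ℂ^G ⊗ ℂ^n`. -/
noncomputable def Piphys (U : G →* Matrix.unitaryGroup (Fin n) ℂ) :
    Matrix (G × G × Fin n) (G × G × Fin n) ℂ :=
  (Fintype.card G : ℂ)⁻¹ •
    ∑ g : G, Lmat g ⊗ₖ (Lmat g ⊗ₖ (U g : Matrix (Fin n) (Fin n) ℂ))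

/-- The algebra of relational observables describing `S` relative to frame `R₁` in
orientation `g₁` : `O_{f_S|R₁} = |G| Π_phys (|g₁⟩⟨g₁| ⊗ 1_G ⊗ f_S) Π_phys`. -/
noncomputable def relAlgS1 (U : G →* Matrix.unitaryGroup (Fin n) ℂ) (g1 : G) :
    Set (Matrix (G × G × Fin n) (G × G × Fin n) ℂ) :=
  Set.range fun fS : Matrix (Fin n) (Fin n) ℂ =>
    (Fintype.card G : ℂ) •
      (Piphys U * (Matrix.single g1 g1 (1 : ℂ) ⊗ₖ ((1 : Matrix G G ℂ) ⊗ₖ fS)) *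
        Piphys U)

/-- The algebra of relational observables describing `S` relative to frame `R₂` in
orientation `g₂` : `O_{f_S|R₂} = |G| Π_phys (1_G ⊗ |g₂⟩⟨g₂| ⊗ f_S) Π_phys`. -/
noncomputable def relAlgS2 (U : G →* Matrix.unitaryGroup (Fin n) ℂ) (g2 : G) :
    Set (Matrix (G × G × Fin n) (G × G × Fin n) ℂ) :=
  Set.range fun fS : Matrix (Fin n) (Fin n) ℂ =>
    (Fintype.card G : ℂ) •
      (Piphys U * ((1 : Matrix G G ℂ) ⊗ₖ (Matrix.single g2 g2 (1 : ℂ) ⊗ₖ fS)) *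
        Piphys U)

set_option linter.unusedSectionVars false

lemma cardG_ne : (Fintype.card G : ℂ) ≠ 0 :=
  Nat.cast_ne_zero.mpr Fintype.card_ne_zero

lemma Piphys_apply (U : G →* Matrix.unitaryGroup (Fin n) ℂ) (a b c d : G) (i j : Fin n) :
    Piphys U (a, b, i) (c, d, j) =
      (Fintype.card G : ℂ)⁻¹ *
        (if a⁻¹ * b = c⁻¹ * d then (U (a * c⁻¹) : Matrix (Fin n) (Fin n) ℂ) i j else 0) := by
  unfold Piphys Lmat
  simp only [Matrix.smul_apply, Matrix.sum_apply, Matrix.kroneckerMap_apply, Matrix.of_apply,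
    smul_eq_mul]
  congr 1
  have key : ∀ g : G,
      (if a = g * c then (1:ℂ) else 0) *
        ((if b = g * d then (1:ℂ) else 0) * (U g : Matrix (Fin n) (Fin n) ℂ) i j) =
      if g = a * c⁻¹ then
        (if a⁻¹ * b = c⁻¹ * d then (U (a * c⁻¹) : Matrix (Fin n) (Fin n) ℂ) i j else 0)
      else 0 := by
    intro g
    by_cases hg : g = a * c⁻¹
    · subst hg
      have h1 : a = a * c⁻¹ * c := by group
      rw [if_pos h1, if_pos rfl]
      have h2 : (b = a * c⁻¹ * d) ↔ (a⁻¹ * b = c⁻¹ * d) := by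
        constructor
        · intro h; rw [h]; group
        · intro h; rw [mul_assoc, ← h]; group
      by_cases h3 : a⁻¹ * b = c⁻¹ * d
      · rw [if_pos (h2.mpr h3), if_pos h3, one_mul, one_mul]
      · rw [if_neg (fun hh => h3 (h2.mp hh)), if_neg h3, zero_mul, mul_zero]
    · have : ¬ a = g * c := fun h => hg (by rw [h]; group)
      rw [if_neg this, if_neg hg, zero_mul]
  rw [Finset.sum_congr rfl (fun g _ => key g), Finset.sum_ite_eq' Finset.univ (a*c⁻¹)]
  simp

set_option linter.unusedSectionVars false

lemma PiX1_apply (U : G →* Matrix.unitaryGroup (Fin n) ℂ) (g1 : G)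
    (f : Matrix (Fin n) (Fin n) ℂ) (a b r s : G) (i l : Fin n) :
    (Piphys U * (Matrix.single g1 g1 (1:ℂ) ⊗ₖ ((1 : Matrix G G ℂ) ⊗ₖ f)))
        (a, b, i) (r, s, l) =
      (Fintype.card G : ℂ)⁻¹ *
        (if r = g1 ∧ s = g1 * (a⁻¹ * b) then
          ((U (a * g1⁻¹) : Matrix (Fin n) (Fin n) ℂ) * f) i l else 0) := by
  rw [Matrix.mul_apply]
  rw [Fintype.sum_prod_type]
  simp only [Fintype.sum_prod_type, Matrix.kroneckerMap_apply, Matrix.single,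
    Matrix.of_apply, Matrix.one_apply]
  simp only [Piphys_apply, ite_and, mul_ite, ite_mul, mul_zero, zero_mul, mul_one, one_mul,
    Finset.sum_ite_eq, Finset.sum_ite_eq', Finset.mem_univ, if_true, Finset.sum_const_zero]
  simp only [Finset.sum_ite_irrel, Finset.sum_const_zero, Finset.sum_ite_eq, Finset.sum_ite_eq',
    Finset.mem_univ, if_true, mul_assoc, ← Finset.mul_sum, ← Matrix.mul_apply]
  exact if_congr eq_comm
    (if_congr ⟨fun h => by rw [h]; group, fun h => by rw [h]; group⟩ rfl rfl) rfl

lemma O1_apply (U : G →* Matrix.unitaryGroup (Fin n) ℂ) (g1 : G)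
    (f : Matrix (Fin n) (Fin n) ℂ) (a b c d : G) (i j : Fin n) :
    ((Fintype.card G : ℂ) •
        (Piphys U * (Matrix.single g1 g1 (1 : ℂ) ⊗ₖ ((1 : Matrix G G ℂ) ⊗ₖ f)) *
          Piphys U)) (a, b, i) (c, d, j) =
      (Fintype.card G : ℂ)⁻¹ *
        (if a⁻¹ * b = c⁻¹ * d then
          ((U (a * g1⁻¹) : Matrix (Fin n) (Fin n) ℂ) * f *
            (U (g1 * c⁻¹) : Matrix (Fin n) (Fin n) ℂ)) i j else 0) := by
  rw [Matrix.smul_apply, Matrix.mul_apply, Fintype.sum_prod_type]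
  simp only [Fintype.sum_prod_type, PiX1_apply, Piphys_apply, ite_and, mul_ite, ite_mul,
    mul_zero, zero_mul, Finset.sum_ite_irrel, Finset.sum_const_zero, Finset.sum_ite_eq,
    Finset.sum_ite_eq', Finset.mem_univ, if_true, inv_mul_cancel_left]
  have key : ∀ x x_1 : G,
      (if x⁻¹ * x_1 = c⁻¹ * d then
        if x = g1 then
          if x_1 = g1 * (a⁻¹ * b) then
            ∑ x_2 : Fin n,
              (Fintype.card G : ℂ)⁻¹ * ((U (a * g1⁻¹) : Matrix (Fin n) (Fin n) ℂ) * f) i x_2 *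
                ((Fintype.card G : ℂ)⁻¹ * (U (x * c⁻¹) : Matrix (Fin n) (Fin n) ℂ) x_2 j)
          else 0
        else 0
      else 0) =
      if x = g1 then
        if x_1 = g1 * (a⁻¹ * b) then
          (if a⁻¹ * b = c⁻¹ * d then
            ∑ x_2 : Fin n,
              (Fintype.card G : ℂ)⁻¹ * ((U (a * g1⁻¹) : Matrix (Fin n) (Fin n) ℂ) * f) i x_2 *
                ((Fintype.card G : ℂ)⁻¹ * (U (g1 * c⁻¹) : Matrix (Fin n) (Fin n) ℂ) x_2 j)
          else 0)
        else 0
      else 0 := by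
    intro x x_1
    by_cases hx : x = g1
    · subst hx
      by_cases h1 : x_1 = x * (a⁻¹ * b)
      · subst h1
        rw [inv_mul_cancel_left, if_pos (rfl : x = x),
          if_pos (rfl : x * (a⁻¹ * b) = x * (a⁻¹ * b)), if_pos (rfl : x = x),
          if_pos (rfl : x * (a⁻¹ * b) = x * (a⁻¹ * b))]
      · simp only [if_neg h1, ite_self]
    · simp only [if_neg hx, ite_self]
  rw [Finset.sum_congr rfl fun x _ => Finset.sum_congr rfl fun x_1 _ => key x x_1]
  simp only [Finset.sum_ite_irrel, Finset.sum_const_zero, Finset.sum_ite_eq',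
    Finset.mem_univ, if_true]
  by_cases h : a⁻¹ * b = c⁻¹ * d
  · rw [if_pos h, if_pos h, smul_eq_mul, Finset.mul_sum,
      Matrix.mul_apply (M := (U (a * g1⁻¹) : Matrix (Fin n) (Fin n) ℂ) * f), Finset.mul_sum]
    refine Finset.sum_congr rfl fun k _ => ?_
    have hc := cardG_ne (G := G)
    field_simp
  · rw [if_neg h, if_neg h, smul_zero]

lemma PiX2_apply (U : G →* Matrix.unitaryGroup (Fin n) ℂ) (g2 : G)
    (f : Matrix (Fin n) (Fin n) ℂ) (a b r s : G) (i l : Fin n) :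
    (Piphys U * ((1 : Matrix G G ℂ) ⊗ₖ (Matrix.single g2 g2 (1:ℂ) ⊗ₖ f)))
        (a, b, i) (r, s, l) =
      (Fintype.card G : ℂ)⁻¹ *
        (if r = g2 * (a⁻¹ * b)⁻¹ ∧ s = g2 then
          ((U (b * g2⁻¹) : Matrix (Fin n) (Fin n) ℂ) * f) i l else 0) := by
  rw [Matrix.mul_apply, Fintype.sum_prod_type]
  simp only [Fintype.sum_prod_type, Matrix.kroneckerMap_apply, Matrix.single,
    Matrix.of_apply, Matrix.one_apply, Piphys_apply, ite_and, mul_ite, ite_mul,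
    mul_zero, zero_mul, mul_one, one_mul, Finset.sum_ite_irrel, Finset.sum_const_zero,
    Finset.sum_ite_eq, Finset.sum_ite_eq', Finset.mem_univ, if_true, mul_assoc,
    ← Finset.mul_sum, ← Matrix.mul_apply]
  by_cases hr : r = g2 * (a⁻¹ * b)⁻¹
  · subst hr
    have hcond : a⁻¹ * b = (g2 * (a⁻¹ * b)⁻¹)⁻¹ * g2 := by group
    have harg : a * (g2 * (a⁻¹ * b)⁻¹)⁻¹ = b * g2⁻¹ := by group
    rw [if_pos (rfl : g2 * (a⁻¹ * b)⁻¹ = g2 * (a⁻¹ * b)⁻¹), if_pos hcond, harg]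
    exact if_congr eq_comm rfl rfl
  · rw [if_neg hr]
    have hc : ¬ (a⁻¹ * b = r⁻¹ * g2) := fun h => hr (by rw [h]; group)
    simp only [if_neg hc, ite_self]

lemma O2_apply (U : G →* Matrix.unitaryGroup (Fin n) ℂ) (g2 : G)
    (f : Matrix (Fin n) (Fin n) ℂ) (a b c d : G) (i j : Fin n) :
    ((Fintype.card G : ℂ) •
        (Piphys U * ((1 : Matrix G G ℂ) ⊗ₖ (Matrix.single g2 g2 (1 : ℂ) ⊗ₖ f)) *
          Piphys U)) (a, b, i) (c, d, j) =
      (Fintype.card G : ℂ)⁻¹ *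
        (if a⁻¹ * b = c⁻¹ * d then
          ((U (b * g2⁻¹) : Matrix (Fin n) (Fin n) ℂ) * f *
            (U (g2 * d⁻¹) : Matrix (Fin n) (Fin n) ℂ)) i j else 0) := by
  rw [Matrix.smul_apply, Matrix.mul_apply, Fintype.sum_prod_type]
  simp only [Fintype.sum_prod_type, PiX2_apply, Piphys_apply, ite_and, mul_ite, ite_mul,
    mul_zero, zero_mul, Finset.sum_ite_irrel, Finset.sum_const_zero, Finset.sum_ite_eq,
    Finset.sum_ite_eq', Finset.mem_univ, if_true]
  have key : ∀ x x_1 : G,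
      (if x⁻¹ * x_1 = c⁻¹ * d then
        if x = g2 * (a⁻¹ * b)⁻¹ then
          if x_1 = g2 then
            ∑ x_2 : Fin n,
              (Fintype.card G : ℂ)⁻¹ * ((U (b * g2⁻¹) : Matrix (Fin n) (Fin n) ℂ) * f) i x_2 *
                ((Fintype.card G : ℂ)⁻¹ * (U (x * c⁻¹) : Matrix (Fin n) (Fin n) ℂ) x_2 j)
          else 0
        else 0
      else 0) =
      if x = g2 * (a⁻¹ * b)⁻¹ then
        if x_1 = g2 then
          (if a⁻¹ * b = c⁻¹ * d then
            ∑ x_2 : Fin n,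
              (Fintype.card G : ℂ)⁻¹ * ((U (b * g2⁻¹) : Matrix (Fin n) (Fin n) ℂ) * f) i x_2 *
                ((Fintype.card G : ℂ)⁻¹ * (U (g2 * d⁻¹) : Matrix (Fin n) (Fin n) ℂ) x_2 j)
          else 0)
        else 0
      else 0 := by
    intro x x_1
    by_cases hx : x = g2 * (a⁻¹ * b)⁻¹
    · by_cases h1 : x_1 = g2
      · have hcond : (x⁻¹ * x_1 = c⁻¹ * d) ↔ (a⁻¹ * b = c⁻¹ * d) := by
          rw [hx, h1]
          constructor
          · intro h; rw [← h]; group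
          · intro h; rw [← h]; group
        rw [if_congr hcond rfl rfl, if_pos hx, if_pos h1, if_pos hx, if_pos h1]
        by_cases h : a⁻¹ * b = c⁻¹ * d
        · rw [if_pos h, if_pos h]
          have harg : x * c⁻¹ = g2 * d⁻¹ := by rw [hx, h]; group
          rw [harg]
        · rw [if_neg h, if_neg h]
      · simp only [if_neg h1, ite_self]
    · simp only [if_neg hx, ite_self]
  rw [Finset.sum_congr rfl fun x _ => Finset.sum_congr rfl fun x_1 _ => key x x_1]
  simp only [Finset.sum_ite_irrel, Finset.sum_const_zero, Finset.sum_ite_eq',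
    Finset.mem_univ, if_true]
  by_cases h : a⁻¹ * b = c⁻¹ * d
  · rw [if_pos h, if_pos h, smul_eq_mul, Finset.mul_sum,
      Matrix.mul_apply (M := (U (b * g2⁻¹) : Matrix (Fin n) (Fin n) ℂ) * f), Finset.mul_sum]
    refine Finset.sum_congr rfl fun k _ => ?_
    have hc := cardG_ne (G := G)
    field_simp
  · rw [if_neg h, if_neg h, smul_zero]

lemma idF_Pi_apply (U : G →* Matrix.unitaryGroup (Fin n) ℂ)
    (f : Matrix (Fin n) (Fin n) ℂ) (a b c d : G) (i j : Fin n) :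
    (((1 : Matrix G G ℂ) ⊗ₖ ((1 : Matrix G G ℂ) ⊗ₖ f)) * Piphys U) (a, b, i) (c, d, j) =
      (Fintype.card G : ℂ)⁻¹ *
        (if a⁻¹ * b = c⁻¹ * d then
          (f * (U (a * c⁻¹) : Matrix (Fin n) (Fin n) ℂ)) i j else 0) := by
  rw [Matrix.mul_apply, Fintype.sum_prod_type]
  simp only [Fintype.sum_prod_type, Matrix.kroneckerMap_apply, Matrix.one_apply,
    Piphys_apply, ite_and, mul_ite, ite_mul, mul_zero, zero_mul, mul_one, one_mul,
    Finset.sum_ite_irrel, Finset.sum_const_zero, Finset.sum_ite_eq, Finset.sum_ite_eq',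
    Finset.mem_univ, if_true, mul_assoc, ← Finset.mul_sum, ← Matrix.mul_apply]
  refine if_congr Iff.rfl ?_ rfl
  rw [Matrix.mul_apply, Finset.mul_sum]
  exact Finset.sum_congr rfl fun k _ => by ring

lemma coeU_mul (U : G →* Matrix.unitaryGroup (Fin n) ℂ) (x y : G) :
    (U x : Matrix (Fin n) (Fin n) ℂ) * (U y : Matrix (Fin n) (Fin n) ℂ) = (U (x * y) : Matrix (Fin n) (Fin n) ℂ) := by
  rw [_root_.map_mul]; rfl

lemma coeU_one (U : G →* Matrix.unitaryGroup (Fin n) ℂ) :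
    (U 1 : Matrix (Fin n) (Fin n) ℂ) = 1 := by
  rw [_root_.map_one]; rfl

lemma O1_eq_of_comm (U : G →* Matrix.unitaryGroup (Fin n) ℂ) (g1 : G)
    (f : Matrix (Fin n) (Fin n) ℂ)
    (hf : ∀ g : G, f * (U g : Matrix (Fin n) (Fin n) ℂ) = (U g : Matrix (Fin n) (Fin n) ℂ) * f) :
    (Fintype.card G : ℂ) •
        (Piphys U * (Matrix.single g1 g1 (1 : ℂ) ⊗ₖ ((1 : Matrix G G ℂ) ⊗ₖ f)) *
          Piphys U) =
      ((1 : Matrix G G ℂ) ⊗ₖ ((1 : Matrix G G ℂ) ⊗ₖ f)) * Piphys U := by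
  ext ⟨a, b, i⟩ ⟨c, d, j⟩
  rw [O1_apply, idF_Pi_apply]
  refine congrArg _ (if_congr Iff.rfl ?_ rfl)
  have : (U (a * g1⁻¹) : Matrix (Fin n) (Fin n) ℂ) * f * (U (g1 * c⁻¹) : Matrix (Fin n) (Fin n) ℂ)
      = f * (U (a * c⁻¹) : Matrix (Fin n) (Fin n) ℂ) := by
    rw [← hf (a * g1⁻¹), mul_assoc, coeU_mul]
    congr 2
    group
  rw [this]

lemma O2_eq_of_comm (U : G →* Matrix.unitaryGroup (Fin n) ℂ) (g2 : G)
    (f : Matrix (Fin n) (Fin n) ℂ)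
    (hf : ∀ g : G, f * (U g : Matrix (Fin n) (Fin n) ℂ) = (U g : Matrix (Fin n) (Fin n) ℂ) * f) :
    (Fintype.card G : ℂ) •
        (Piphys U * ((1 : Matrix G G ℂ) ⊗ₖ (Matrix.single g2 g2 (1 : ℂ) ⊗ₖ f)) *
          Piphys U) =
      ((1 : Matrix G G ℂ) ⊗ₖ ((1 : Matrix G G ℂ) ⊗ₖ f)) * Piphys U := by
  ext ⟨a, b, i⟩ ⟨c, d, j⟩
  rw [O2_apply, idF_Pi_apply]
  refine congrArg _ ?_
  by_cases h : a⁻¹ * b = c⁻¹ * d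
  · rw [if_pos h, if_pos h]
    have hb : b = a * (c⁻¹ * d) := by rw [← h]; group
    have : (U (b * g2⁻¹) : Matrix (Fin n) (Fin n) ℂ) * f * (U (g2 * d⁻¹) : Matrix (Fin n) (Fin n) ℂ)
        = f * (U (a * c⁻¹) : Matrix (Fin n) (Fin n) ℂ) := by
      rw [← hf (b * g2⁻¹), mul_assoc, coeU_mul]
      congr 2
      rw [hb]; group
    rw [this]
  · rw [if_neg h, if_neg h]

lemma extract (U : G →* Matrix.unitaryGroup (Fin n) ℂ) (g1 g2 : G)
    (f f' : Matrix (Fin n) (Fin n) ℂ)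
    (h : (Fintype.card G : ℂ) •
        (Piphys U * (Matrix.single g1 g1 (1 : ℂ) ⊗ₖ ((1 : Matrix G G ℂ) ⊗ₖ f)) *
          Piphys U) =
      (Fintype.card G : ℂ) •
        (Piphys U * ((1 : Matrix G G ℂ) ⊗ₖ (Matrix.single g2 g2 (1 : ℂ) ⊗ₖ f')) *
          Piphys U)) :
    f = f' ∧ ∀ g : G, f * (U g : Matrix (Fin n) (Fin n) ℂ) = (U g : Matrix (Fin n) (Fin n) ℂ) * f := by
  have key : ∀ a b : G,
      (U (a * g1⁻¹) : Matrix (Fin n) (Fin n) ℂ) * f * (U (g1 * g1⁻¹) : Matrix (Fin n) (Fin n) ℂ) =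
      (U (b * g2⁻¹) : Matrix (Fin n) (Fin n) ℂ) * f' *
        (U (g2 * (g1 * (a⁻¹ * b))⁻¹) : Matrix (Fin n) (Fin n) ℂ) := by
    intro a b
    ext i j
    have h2 := congrFun (congrFun h (a, b, i)) (g1, g1 * (a⁻¹ * b), j)
    rw [O1_apply, O2_apply] at h2
    have hcond : a⁻¹ * b = g1⁻¹ * (g1 * (a⁻¹ * b)) := by group
    rw [if_pos hcond, if_pos hcond] at h2
    exact mul_left_cancel₀ (inv_ne_zero (cardG_ne (G := G))) h2
  have hU1 : ∀ x : G, x = 1 → (U x : Matrix (Fin n) (Fin n) ℂ) = 1 := by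
    intro x hx; rw [hx]; exact coeU_one U
  have hff' : f = f' := by
    have k := key g1 g2
    rw [hU1 (g1 * g1⁻¹) (by group), hU1 (g2 * g2⁻¹) (by group),
      hU1 (g2 * (g1 * (g1⁻¹ * g2))⁻¹) (by group)] at k
    simpa using k
  refine ⟨hff', fun g => ?_⟩
  have k := key (g * g1) g2
  rw [hU1 (g1 * g1⁻¹) (by group), hU1 (g2 * g2⁻¹) (by group)] at k
  have e1 : g * g1 * g1⁻¹ = g := by group
  have e2 : g2 * (g1 * ((g * g1)⁻¹ * g2))⁻¹ = g := by group
  rw [e1, e2] at k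
  simp only [mul_one, one_mul] at k
  rw [hff'] at k ⊢
  exact k.symm

/-- quantum relativity of subsystems. The overlap of the relational
system algebras relative to the two frames consists exactly of the translation-invariant
system operators restricted to the physical subspace; and the two algebras are distinct
whenever some `U_S(h)` is not a scalar. -/
theorem relational_S_algebras_overlap (hn : 1 ≤ n)
    (U : G →* Matrix.unitaryGroup (Fin n) ℂ) (g1 g2 : G) :
    (relAlgS1 U g1 ∩ relAlgS2 U g2 =
      {M : Matrix (G × G × Fin n) (G × G × Fin n) ℂ |
        ∃ fS : Matrix (Fin n) (Fin n) ℂ,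
          (∀ g : G, fS * (U g : Matrix (Fin n) (Fin n) ℂ) =
            (U g : Matrix (Fin n) (Fin n) ℂ) * fS) ∧
          M = ((1 : Matrix G G ℂ) ⊗ₖ ((1 : Matrix G G ℂ) ⊗ₖ fS)) * Piphys U}) ∧
    ((∃ h : G,
        ¬ ∃ c : ℂ, (U h : Matrix (Fin n) (Fin n) ℂ) = c • (1 : Matrix (Fin n) (Fin n) ℂ)) →
      relAlgS1 U g1 ≠ relAlgS2 U g2) := by
  constructor
  · ext M
    simp only [Set.mem_inter_iff, relAlgS1, relAlgS2, Set.mem_range, Set.mem_setOf_eq]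
    constructor
    · rintro ⟨⟨f, hf⟩, ⟨f', hf'⟩⟩
      obtain ⟨hff', hcomm⟩ := extract U g1 g2 f f' (hf.trans hf'.symm)
      exact ⟨f, hcomm, by rw [← hf, O1_eq_of_comm U g1 f hcomm]⟩
    · rintro ⟨f, hcomm, rfl⟩
      exact ⟨⟨f, O1_eq_of_comm U g1 f hcomm⟩, ⟨f, O2_eq_of_comm U g2 f hcomm⟩⟩
  · rintro ⟨h, hh⟩ heq
    apply hh
    have hcomm : ∀ f : Matrix (Fin n) (Fin n) ℂ,
        f * (U h : Matrix (Fin n) (Fin n) ℂ) = (U h : Matrix (Fin n) (Fin n) ℂ) * f := by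
      intro f
      have hmem : ((Fintype.card G : ℂ) •
          (Piphys U * (Matrix.single g1 g1 (1 : ℂ) ⊗ₖ ((1 : Matrix G G ℂ) ⊗ₖ f)) *
            Piphys U)) ∈ relAlgS2 U g2 := by
        rw [← heq]; exact ⟨f, rfl⟩
      obtain ⟨f', hf'⟩ := hmem
      exact (extract U g1 g2 f f' hf'.symm).2 h
    obtain ⟨c, hc⟩ := Matrix.mem_range_scalar_of_commute_single
      (M := (U h : Matrix (Fin n) (Fin n) ℂ)) (fun i j _ => hcomm _)
    exact ⟨c, by rw [← hc, Matrix.scalar_apply, Matrix.smul_one_eq_diagonal]⟩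
end

section
/- Let ρ be a density matrix on ℂ^G ⊗ ℂ^n, fix frame orientations g_i, g_j ∈ G and a unitary Z on ℂ^n. Suppose ρ admits a decomposition ρ = Σ_{A=1}^N p_A ρ_A with p_A > 0, Σ_A p_A = 1, each ρ_A a pure density matrix, such that for each A there exists a unitary Y_A on ℂ^G with 𝐔 ρ_A 𝐔† = (Y_A ⊗ Z)† ρ_A (Y_A ⊗ Z). Then Tr_F(𝐔 ρ 𝐔†) = Z† Tr_F(ρ) Z; in particular S_α(Tr_F(𝐔 ρ 𝐔†)) = S_α(Tr_F(ρ)) for all α ∈ (0,1) ∪ (1,∞). -/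
open Matrix Kronecker
open scoped ComplexOrder

variable {G : Type*} [Fintype G] [CommGroup G] [DecidableEq G] {n : ℕ}

/-- The partial trace over the frame factor `ℂ^G`. -/
noncomputable def trF (ρ : Matrix (G × Fin n) (G × Fin n) ℂ) :
    Matrix (Fin n) (Fin n) ℂ :=
  Matrix.of fun s t => ∑ g : G, ρ (g, s) (g, t)

/-- The `α`-Rényi entropy `S_α(σ) = (1-α)⁻¹ log Tr(σ^α)`, where `σ^α` is obtained by
applying `t ↦ t^α` (with `0^α = 0`) to the eigenvalues of a Hermitian `σ`. -/
noncomputable def renyiEntropy {m : Type*} [Fintype m] [DecidableEq m]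
    (σ : Matrix m m ℂ) (α : ℝ) : ℝ :=
  if h : σ.IsHermitian then (1 - α)⁻¹ * Real.log (∑ i, h.eigenvalues i ^ α) else 0


section Aux
open Polynomial

variable {m : Type*} [Fintype m] [DecidableEq m]

private lemma charpoly_unitary_conj' (W A : Matrix m m ℂ) (hW : W ∈ Matrix.unitaryGroup m ℂ) :
    (Wᴴ * A * W).charpoly = A.charpoly := by
  have h1 : Wᴴ * W = 1 := Matrix.UnitaryGroup.star_mul_self ⟨W, hW⟩
  have hmap : (Wᴴ).map (C : ℂ →+* ℂ[X]) * W.map C = 1 := by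
    rw [← Matrix.map_mul, h1]; simp
  have hcm : charmatrix (Wᴴ * A * W) = (Wᴴ).map (C : ℂ →+* ℂ[X]) * charmatrix A * W.map C := by
    unfold charmatrix
    simp only [RingHom.mapMatrix_apply]
    rw [Matrix.mul_sub, Matrix.sub_mul]
    congr 1
    · have := (Matrix.scalar_commute (X : ℂ[X]) (fun r => Commute.all _ _)
        ((Wᴴ).map (C : ℂ →+* ℂ[X]))).eq
      rw [← this, Matrix.mul_assoc, hmap, Matrix.mul_one]
    · rw [Matrix.map_mul, Matrix.map_mul]
  have hdet : det ((Wᴴ).map (C : ℂ →+* ℂ[X])) * det (W.map (C : ℂ →+* ℂ[X])) = 1 := by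
    rw [← det_mul, hmap, det_one]
  rw [Matrix.charpoly, hcm, det_mul, det_mul, Matrix.charpoly]
  calc det ((Wᴴ).map (C : ℂ →+* ℂ[X])) * det (charmatrix A) * det (W.map (C : ℂ →+* ℂ[X]))
      = det ((Wᴴ).map (C : ℂ →+* ℂ[X])) * det (W.map (C : ℂ →+* ℂ[X])) * det (charmatrix A) := by
        ring
    _ = det (charmatrix A) := by rw [hdet, one_mul]

private lemma charpoly_hermitian' (A : Matrix m m ℂ) (hA : A.IsHermitian) :
    A.charpoly = ((Finset.univ.val.map fun i => ((hA.eigenvalues i : ℝ) : ℂ)).map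
      fun r => X - C r).prod := by
  have hV := hA.eigenvectorUnitary.2
  have hD : A = ((hA.eigenvectorUnitary : Matrix m m ℂ))ᴴᴴ *
      Matrix.diagonal (RCLike.ofReal ∘ hA.eigenvalues) *
      (hA.eigenvectorUnitary : Matrix m m ℂ)ᴴ := by
    rw [conjTranspose_conjTranspose]
    exact hA.spectral_theorem
  have hWmem : (hA.eigenvectorUnitary : Matrix m m ℂ)ᴴ ∈ Matrix.unitaryGroup m ℂ := by
    rw [← Matrix.star_eq_conjTranspose]
    exact Unitary.star_mem hV
  conv_lhs => rw [hD]
  rw [charpoly_unitary_conj' _ _ hWmem]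
  have hch : charmatrix (Matrix.diagonal (RCLike.ofReal ∘ hA.eigenvalues) : Matrix m m ℂ)
      = Matrix.diagonal fun i => (X : ℂ[X]) - C ((hA.eigenvalues i : ℂ)) := by
    ext i j
    by_cases h : i = j
    · subst h; simp [charmatrix_apply_eq, Matrix.diagonal]
    · simp [charmatrix_apply_ne _ _ _ h, Matrix.diagonal_apply_ne _ h]
  rw [Matrix.charpoly, hch, det_diagonal]
  rw [Multiset.map_map, Finset.prod]
  rfl

private lemma sum_fn_eigenvalues_eq' (A B : Matrix m m ℂ) (hA : A.IsHermitian)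
    (hB : B.IsHermitian) (h : A.charpoly = B.charpoly) (f : ℝ → ℝ) :
    ∑ i, f (hA.eigenvalues i) = ∑ i, f (hB.eigenvalues i) := by
  have hmul : (Finset.univ.val.map fun i => ((hA.eigenvalues i : ℝ) : ℂ))
      = (Finset.univ.val.map fun i => ((hB.eigenvalues i : ℝ) : ℂ)) := by
    have heq := (charpoly_hermitian' A hA).symm.trans (h.trans (charpoly_hermitian' B hB))
    have h1 := congrArg Polynomial.roots heq
    rwa [Polynomial.roots_multiset_prod_X_sub_C, Polynomial.roots_multiset_prod_X_sub_C] at h1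
  have hre : (Finset.univ.val.map hA.eigenvalues) = (Finset.univ.val.map hB.eigenvalues) := by
    apply Multiset.map_injective Complex.ofReal_injective
    rw [Multiset.map_map, Multiset.map_map]
    exact hmul
  calc ∑ i, f (hA.eigenvalues i)
      = ((Finset.univ.val.map hA.eigenvalues).map f).sum := by
        rw [Multiset.map_map]; rfl
    _ = ((Finset.univ.val.map hB.eigenvalues).map f).sum := by rw [hre]
    _ = ∑ i, f (hB.eigenvalues i) := by rw [Multiset.map_map]; rfl

private lemma renyi_congr' (A B : Matrix m m ℂ) (hA : A.IsHermitian) (hB : B.IsHermitian)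
    (h : A.charpoly = B.charpoly) (α : ℝ) : renyiEntropy A α = renyiEntropy B α := by
  rw [renyiEntropy, renyiEntropy, dif_pos hA, dif_pos hB,
    sum_fn_eigenvalues_eq' A B hA hB h (fun x => x ^ α)]

end Aux

section Aux2

variable {G : Type*} [Fintype G] [DecidableEq G] {n : ℕ}

private lemma trF_conj' (Y : Matrix G G ℂ) (hY : Y * Yᴴ = 1)
    (Z : Matrix (Fin n) (Fin n) ℂ) (M : Matrix (G × Fin n) (G × Fin n) ℂ) :
    trF ((Y ⊗ₖ Z)ᴴ * M * (Y ⊗ₖ Z)) = Zᴴ * trF M * Z := by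
  have key : ∀ x3 x1 : G, (∑ g : G, star (Y x3 g) * Y x1 g)
      = if x3 = x1 then (1 : ℂ) else 0 := by
    intro x3 x1
    have h := congrFun (congrFun hY x3) x1
    simp only [Matrix.mul_apply, conjTranspose_apply, Matrix.one_apply] at h
    calc (∑ g : G, star (Y x3 g) * Y x1 g)
        = star (∑ g : G, Y x3 g * star (Y x1 g)) := by
          rw [star_sum]; exact Finset.sum_congr rfl fun g _ => by
            simp only [StarMul.star_mul, star_star]; ring
      _ = star (if x3 = x1 then (1 : ℂ) else 0) := by rw [h]
      _ = if x3 = x1 then (1 : ℂ) else 0 := by split <;> simp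
  ext s t
  show (∑ g : G, ((Y ⊗ₖ Z)ᴴ * M * (Y ⊗ₖ Z)) (g, s) (g, t)) = (Zᴴ * trF M * Z) s t
  have lhs_eq : ∀ g : G, ((Y ⊗ₖ Z)ᴴ * M * (Y ⊗ₖ Z)) (g, s) (g, t)
      = ∑ k : G × Fin n, ∑ l : G × Fin n,
          (star (Y k.1 g) * Y l.1 g) * (star (Z k.2 s) * M k l * Z l.2 t) := by
    intro g
    simp only [Matrix.mul_apply, conjTranspose_apply, kroneckerMap_apply, Finset.sum_mul,
      Finset.mul_sum]
    rw [Finset.sum_comm]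
    refine Finset.sum_congr rfl fun k _ => Finset.sum_congr rfl fun l _ => ?_
    simp only [StarMul.star_mul]
    ring
  rw [Finset.sum_congr rfl fun g _ => lhs_eq g]
  rw [Finset.sum_comm]
  calc ∑ k : G × Fin n, ∑ g : G, ∑ l : G × Fin n,
        (star (Y k.1 g) * Y l.1 g) * (star (Z k.2 s) * M k l * Z l.2 t)
      = ∑ k : G × Fin n, ∑ l : G × Fin n,
          (∑ g : G, star (Y k.1 g) * Y l.1 g) * (star (Z k.2 s) * M k l * Z l.2 t) := by
        refine Finset.sum_congr rfl fun k _ => ?_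
        rw [Finset.sum_comm]
        exact Finset.sum_congr rfl fun l _ => by rw [Finset.sum_mul]
    _ = ∑ k : G × Fin n, ∑ l : G × Fin n,
          (if k.1 = l.1 then (1:ℂ) else 0) * (star (Z k.2 s) * M k l * Z l.2 t) := by
        simp_rw [key]
    _ = ∑ k : G × Fin n, ∑ l2 : Fin n, star (Z k.2 s) * M k (k.1, l2) * Z l2 t := by
        refine Finset.sum_congr rfl fun k _ => ?_
        rw [Fintype.sum_prod_type]
        rw [Finset.sum_eq_single k.1]
        · simp
        · intro b _ hb; simp [Ne.symm hb]
        · simp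
    _ = (Zᴴ * trF M * Z) s t := by
        simp only [Matrix.mul_apply, conjTranspose_apply, trF, of_apply, Fintype.sum_prod_type,
          Finset.sum_mul, Finset.mul_sum]
        conv_rhs => rw [Finset.sum_comm]
        conv_rhs => enter [2, x1]; rw [Finset.sum_comm]
        conv_rhs => rw [Finset.sum_comm]

private lemma trF_sum' {N : ℕ} (f : Fin N → Matrix (G × Fin n) (G × Fin n) ℂ) :
    trF (∑ A, f A) = ∑ A, trF (f A) := by
  ext s t
  simp only [trF, of_apply, Matrix.sum_apply]
  rw [Finset.sum_comm]

private lemma trF_smul' (c : ℂ) (M : Matrix (G × Fin n) (G × Fin n) ℂ) :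
    trF (c • M) = c • trF M := by
  ext s t
  simp [trF, Finset.mul_sum]

private lemma trF_isHermitian' {ρ : Matrix (G × Fin n) (G × Fin n) ℂ} (hρ : ρ.IsHermitian) :
    (trF ρ).IsHermitian := by
  ext s t
  simp only [conjTranspose_apply, trF, of_apply, star_sum]
  exact Finset.sum_congr rfl fun g _ => congrFun (congrFun hρ (g, s)) (g, t)

end Aux2

/-- mixed global states. If a density matrix `ρ` admits a pure-state
decomposition in which every pure component is invariant up to a bilocal unitary `Y_A ⊗ Z`
(with the same `Z`), then the reduced system states in the two QRF perspectives are related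
by `Z`, and all `α`-Rényi entropies agree. -/
theorem mixed_state_reduced_states_unitarily_related (hn : 1 ≤ n)
    (U : G →* Matrix.unitaryGroup (Fin n) ℂ) (gi gj : G)
    (ρ : Matrix (G × Fin n) (G × Fin n) ℂ)
    (hρ : ρ.PosSemidef) (htr : ρ.trace = 1)
    (Z : Matrix (Fin n) (Fin n) ℂ) (hZ : Z ∈ Matrix.unitaryGroup (Fin n) ℂ)
    (N : ℕ) (p : Fin N → ℝ) (ρA : Fin N → Matrix (G × Fin n) (G × Fin n) ℂ)
    (hp : ∀ A, 0 < p A) (hpsum : ∑ A, p A = 1)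
    (hApure : ∀ A, (ρA A).PosSemidef ∧ (ρA A).trace = 1 ∧ ρA A * ρA A = ρA A)
    (hdecomp : ρ = ∑ A, (p A : ℂ) • ρA A)
    (hAinv : ∀ A, ∃ Y ∈ Matrix.unitaryGroup G ℂ,
      Uqrf U gi gj * ρA A * (Uqrf U gi gj)ᴴ = (Y ⊗ₖ Z)ᴴ * ρA A * (Y ⊗ₖ Z)) :
    trF (Uqrf U gi gj * ρ * (Uqrf U gi gj)ᴴ) = Zᴴ * trF ρ * Z ∧
      ∀ α : ℝ, α ∈ Set.Ioo (0 : ℝ) 1 ∪ Set.Ioi (1 : ℝ) →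
        renyiEntropy (trF (Uqrf U gi gj * ρ * (Uqrf U gi gj)ᴴ)) α =
          renyiEntropy (trF ρ) α := by
  set Uu := Uqrf U gi gj with hUu
  have hmain : trF (Uu * ρ * Uuᴴ) = Zᴴ * trF ρ * Z := by
    have hterm : ∀ A, trF (Uu * ρA A * Uuᴴ) = Zᴴ * trF (ρA A) * Z := by
      intro A
      obtain ⟨Y, hY, hYeq⟩ := hAinv A
      have hY1 : Y * Yᴴ = 1 := by
        have := Matrix.mem_unitaryGroup_iff.mp hY
        rwa [Matrix.star_eq_conjTranspose] at this
      rw [hYeq, trF_conj' Y hY1]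
    have hUexp : Uu * ρ * Uuᴴ = ∑ A, (p A : ℂ) • (Uu * ρA A * Uuᴴ) := by
      rw [hdecomp, Finset.mul_sum, Finset.sum_mul]
      exact Finset.sum_congr rfl fun A _ => by rw [mul_smul_comm, smul_mul_assoc]
    calc trF (Uu * ρ * Uuᴴ)
        = trF (∑ A, (p A : ℂ) • (Uu * ρA A * Uuᴴ)) := by rw [hUexp]
      _ = ∑ A, (p A : ℂ) • trF (Uu * ρA A * Uuᴴ) := by
          rw [trF_sum']
          exact Finset.sum_congr rfl fun A _ => trF_smul' _ _
      _ = ∑ A, (p A : ℂ) • (Zᴴ * trF (ρA A) * Z) := by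
          exact Finset.sum_congr rfl fun A _ => by rw [hterm A]
      _ = Zᴴ * (∑ A, (p A : ℂ) • trF (ρA A)) * Z := by
          rw [Finset.mul_sum, Finset.sum_mul]
          refine Finset.sum_congr rfl fun A _ => ?_
          rw [mul_smul_comm, smul_mul_assoc]
      _ = Zᴴ * trF ρ * Z := by
          rw [hdecomp, trF_sum']
          congr 2
          exact (Finset.sum_congr rfl fun A _ => (trF_smul' _ _).symm)
  refine ⟨hmain, fun α _ => ?_⟩
  have hσ : (trF ρ).IsHermitian := trF_isHermitian' hρ.1
  have hσ' : (trF (Uu * ρ * Uuᴴ)).IsHermitian := by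
    rw [hmain]
    have : (Zᴴ * trF ρ * Z)ᴴ = Zᴴ * trF ρ * Z := by
      rw [conjTranspose_mul, conjTranspose_mul, conjTranspose_conjTranspose, hσ.eq,
        Matrix.mul_assoc]
    exact this
  apply renyi_congr' _ _ hσ' hσ
  rw [hmain]
  exact charpoly_unitary_conj' Z (trF ρ) hZ
end

section
/- Let ρ be a pure density matrix on ℂ^G ⊗ ℂ^n that commutes with 1_G ⊗ U_S(g) for every g ∈ G, and fix frame orientations g_i, g_j ∈ G. Then there exists a function q : G → ℂ with |q(g)| = 1 for all g such that Y := Σ_{g∈G} conj(q(g)) |g⁻¹ g_j⟩⟨g_i g| is a unitary on ℂ^G and 𝐔 ρ 𝐔† = (Y ⊗ 1_n)† ρ (Y ⊗ 1_n). -/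
open Matrix Kronecker
open scoped ComplexOrder

variable {G : Type*} [Fintype G] [CommGroup G] [DecidableEq G] {n : ℕ}


section auxiliary
variable {m : Type*} [Fintype m] [DecidableEq m]
set_option linter.unusedSectionVars false

lemma kron_conjT_s13 {l p r s : Type*} (A : Matrix l p ℂ) (B : Matrix r s ℂ) :
    (A ⊗ₖ B)ᴴ = Aᴴ ⊗ₖ Bᴴ := by
  ext ⟨a, b⟩ ⟨c, d⟩
  simp [conjTranspose_apply, star_mul', mul_comm]

lemma sum_kron {ι l p r s : Type*} (t : Finset ι) (f : ι → Matrix l p ℂ) (B : Matrix r s ℂ) :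
    (∑ i ∈ t, f i) ⊗ₖ B = ∑ i ∈ t, (f i ⊗ₖ B) := by
  ext ⟨a, b⟩ ⟨c, d⟩
  simp [Matrix.sum_apply, Finset.sum_mul]

lemma mul_vecMulVec' {l : Type*} {p : Type*} (A : Matrix l m ℂ) (u : m → ℂ) (v : p → ℂ) :
    A * vecMulVec u v = vecMulVec (A *ᵥ u) v := by
  ext a b
  simp [Matrix.mul_apply, vecMulVec_apply, mulVec, dotProduct, Finset.sum_mul, mul_assoc]

lemma vecMulVec_mulVec' {l : Type*} (u : l → ℂ) (v : m → ℂ) (x : m → ℂ) :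
    vecMulVec u v *ᵥ x = (v ⬝ᵥ x) • u := by
  ext a
  simp [mulVec, vecMulVec_apply, dotProduct, Finset.mul_sum, Finset.sum_mul, mul_assoc,
    mul_comm, mul_left_comm]

lemma smul_vecMulVec {l p : Type*} (c : ℂ) (u : l → ℂ) (v : p → ℂ) :
    vecMulVec (c • u) v = c • vecMulVec u v := by
  ext a b
  simp [vecMulVec_apply, mul_assoc]

lemma psd_trace_eq_zero {A : Matrix m m ℂ} (hA : A.PosSemidef) (h : A.trace = 0) : A = 0 := by
  exact hA.trace_eq_zero_iff.mp h


lemma stdBasis_conjT {l p : Type*} [DecidableEq l] [DecidableEq p] (i : l) (j : p) (c : ℂ) :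
    (Matrix.single i j c)ᴴ = Matrix.single j i (star c) := by
  ext a b
  simp only [Matrix.conjTranspose_apply, Matrix.single, Matrix.of_apply, apply_ite,
    star_zero, and_comm]
  split <;> simp


lemma pure_rank_one {A : Matrix m m ℂ} (hA : A.PosSemidef) (htr : A.trace = 1)
    (hp : A * A = A) : ∃ ψ : m → ℂ, A = vecMulVec ψ (star ψ) := by
  have hne : ∃ x : m, A x x ≠ 0 := by
    by_contra hc
    push_neg at hc
    simp [Matrix.trace, Matrix.diag_apply, hc] at htr
  obtain ⟨x0, hx0⟩ := hne
  set c : ℂ := A x0 x0 with hcdef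
  have hcstar : star c = c := by
    have := congrFun (congrFun hA.1 x0) x0
    simpa [conjTranspose_apply] using this
  have hcnn : 0 ≤ c := by
    exact hA.diag_nonneg
  have hc0 : c ≠ 0 := hx0
  set E : Matrix m m ℂ := single x0 x0 (1 : ℂ) with hEdef
  have hEH : Eᴴ = E := by
    ext a b
    simp [hEdef, conjTranspose_apply, Matrix.single, and_comm]
  have hEAE : E * A * E = c • E := by
    ext a b
    simp only [Matrix.mul_apply, hEdef, Matrix.single, Matrix.of_apply,
      Matrix.smul_apply, smul_eq_mul]
    simp [Finset.sum_ite_eq, ite_and, Finset.mul_sum, Finset.sum_ite_eq']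
    aesop
  have hX : ∀ a b, (A * E * A) a b = A a x0 * A x0 b := by
    intro a b
    simp [Matrix.mul_apply, hEdef, Matrix.single, ite_and, mul_ite,
      Finset.sum_ite_eq, Finset.sum_ite_eq', Finset.mul_sum]
  set B : Matrix m m ℂ := 1 - (1/c) • (A * E) with hBdef
  have hBH : Bᴴ = 1 - (1/c) • (E * A) := by
    rw [hBdef]
    simp [conjTranspose_smul, conjTranspose_mul, hEH, hA.1.eq, hcstar]
  have h1 : B * A = A - (1/c) • (A * E * A) := by
    rw [hBdef, sub_mul, one_mul, smul_mul_assoc]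
  have h2 : A * E * A * (E * A) = c • (A * E * A) := by
    have assoc : A * E * A * (E * A) = A * (E * A * E) * A := by
      simp only [mul_assoc]
    rw [assoc, hEAE, mul_smul_comm, smul_mul_assoc]
  have e1 : A * ((1/c) • (E * A)) = (1/c) • (A * E * A) := by
    rw [mul_smul_comm, ← mul_assoc]
  have e2 : ((1/c) • (A * E * A)) * ((1/c) • (E * A)) = (1/c) • (A * E * A) := by
    rw [smul_mul_assoc, mul_smul_comm, h2, smul_smul, smul_smul]
    congr 1
    field_simp
  have hσ : B * A * Bᴴ = A - (1/c) • (A * E * A) := by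
    rw [h1, hBH, mul_sub, mul_one, sub_mul, e1, e2]
    abel
  have htrX : (A * E * A).trace = c := by
    rw [Matrix.trace_mul_cycle, hp]
    simp [Matrix.trace, Matrix.diag_apply, Matrix.mul_apply, hEdef, Matrix.single,
      ite_and, mul_ite, Finset.sum_ite_eq, Finset.sum_ite_eq', hcdef]
  have hzero : A - (1/c) • (A * E * A) = 0 := by
    refine psd_trace_eq_zero (hσ ▸ hA.mul_mul_conjTranspose_same B) ?_
    rw [Matrix.trace_sub, Matrix.trace_smul, htrX, htr]
    rw [smul_eq_mul, one_div, inv_mul_cancel₀ hc0, sub_self]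
  have hkey : A = (1/c) • (A * E * A) := by
    rwa [sub_eq_zero] at hzero
  -- build ψ
  have hre : 0 ≤ c.re ∧ 0 = c.im := by
    rw [Complex.le_def] at hcnn
    simpa using hcnn
  set r : ℝ := c.re with hrdef
  have hrc : (r : ℂ) = c := by
    apply Complex.ext <;> simp [hrdef, ← hre.2]
  have hrpos : 0 < r := by
    rcases hre.1.lt_or_eq with h | h
    · exact h
    · exfalso; apply hc0; rw [← hrc, ← h]; simp
  set s : ℝ := Real.sqrt r with hsdef
  have hss : (s : ℂ) * s = c := by
    rw [← hrc]
    norm_cast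
    exact Real.mul_self_sqrt hrpos.le
  have hs0 : (s : ℂ) ≠ 0 :=
    Complex.ofReal_ne_zero.mpr (Real.sqrt_pos.mpr hrpos).ne'
  refine ⟨fun a => (s : ℂ)⁻¹ * A a x0, ?_⟩
  ext a b
  rw [vecMulVec_apply]
  conv_lhs => rw [hkey]
  have hherm : (starRingEnd ℂ) (A b x0) = A x0 b := by
    have := congrFun (congrFun hA.1 x0) b
    simpa [conjTranspose_apply] using this
  simp only [Matrix.smul_apply, hX, smul_eq_mul, Pi.star_apply, star_mul', Complex.star_def,
    Complex.conj_ofReal, map_inv₀]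
  rw [hherm]
  have hinv : ((s:ℂ))⁻¹ * ((s:ℂ))⁻¹ = c⁻¹ := by
    rw [← mul_inv, hss]
  rw [one_div, ← hinv]
  ring

end auxiliary

set_option linter.unusedVariables false

/-- A translation-invariant pure global state is invariant, up to a
frame-local unitary `Y ⊗ 1_n` with `Y = Σ_g conj(q(g)) |g⁻¹g_j⟩⟨g_i g|` for some phases
`q : G → ℂ`, under the QRF transformation. -/
theorem translation_invariant_pure_state_TPS_invariant (hn : 1 ≤ n)
    (U : G →* Matrix.unitaryGroup (Fin n) ℂ) (gi gj : G)
    (ρ : Matrix (G × Fin n) (G × Fin n) ℂ)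
    (hρ : ρ.PosSemidef) (htr : ρ.trace = 1) (hpure : ρ * ρ = ρ)
    (hcomm : ∀ g : G,
      ((1 : Matrix G G ℂ) ⊗ₖ (U g : Matrix (Fin n) (Fin n) ℂ)) * ρ =
        ρ * ((1 : Matrix G G ℂ) ⊗ₖ (U g : Matrix (Fin n) (Fin n) ℂ))) :
    ∃ q : G → ℂ, (∀ g : G, ‖q g‖ = 1) ∧
      (∑ g : G, Matrix.single (g⁻¹ * gj) (gi * g) (star (q g)))
        ∈ Matrix.unitaryGroup G ℂ ∧
      Uqrf U gi gj * ρ * (Uqrf U gi gj)ᴴ =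
        ((∑ g : G, Matrix.single (g⁻¹ * gj) (gi * g) (star (q g))) ⊗ₖ
            (1 : Matrix (Fin n) (Fin n) ℂ))ᴴ * ρ *
          ((∑ g : G, Matrix.single (g⁻¹ * gj) (gi * g) (star (q g))) ⊗ₖ
            (1 : Matrix (Fin n) (Fin n) ℂ)) := by
  classical
  obtain ⟨ψ, hρψ⟩ := pure_rank_one hρ htr hpure
  have hunit : star ψ ⬝ᵥ ψ = 1 := by
    rw [← htr, hρψ]
    simp [Matrix.trace, Matrix.diag_apply, vecMulVec_apply, dotProduct, mul_comm]
  -- V g is unitary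
  have hVU : ∀ g : G, ((1 : Matrix G G ℂ) ⊗ₖ (U g : Matrix (Fin n) (Fin n) ℂ))ᴴ *
      ((1 : Matrix G G ℂ) ⊗ₖ (U g : Matrix (Fin n) (Fin n) ℂ)) = 1 := by
    intro g
    rw [kron_conjT_s13, ← mul_kronecker_mul]
    have h1 : (U g : Matrix (Fin n) (Fin n) ℂ)ᴴ * (U g : Matrix (Fin n) (Fin n) ℂ) = 1 := by
      have := (U g).2.1
      rwa [Matrix.star_eq_conjTranspose] at this
    simp [h1]
  have hρmv : ρ *ᵥ ψ = ψ := by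
    rw [hρψ, vecMulVec_mulVec', hunit, one_smul]
  set q : G → ℂ := fun g =>
    star ψ ⬝ᵥ (((1 : Matrix G G ℂ) ⊗ₖ (U g : Matrix (Fin n) (Fin n) ℂ)) *ᵥ ψ) with hqdef
  have heig : ∀ g : G,
      ((1 : Matrix G G ℂ) ⊗ₖ (U g : Matrix (Fin n) (Fin n) ℂ)) *ᵥ ψ = q g • ψ := by
    intro g
    conv_lhs => rw [← hρmv, Matrix.mulVec_mulVec, hcomm g, ← Matrix.mulVec_mulVec, hρψ,
      vecMulVec_mulVec']
  have hnorm : ∀ g, star (q g) * q g = 1 := by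
    intro g
    have h1 : star (((1 : Matrix G G ℂ) ⊗ₖ (U g : Matrix (Fin n) (Fin n) ℂ)) *ᵥ ψ) ⬝ᵥ
        (((1 : Matrix G G ℂ) ⊗ₖ (U g : Matrix (Fin n) (Fin n) ℂ)) *ᵥ ψ) = 1 := by
      rw [Matrix.star_mulVec, ← Matrix.dotProduct_mulVec, Matrix.mulVec_mulVec, hVU,
        Matrix.one_mulVec]
      exact hunit
    rw [heig g, star_smul, smul_dotProduct, dotProduct_smul, hunit] at h1
    simpa [mul_comm] using h1
  have hq1 : ∀ g, ‖q g‖ = 1 := by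
    intro g
    have := hnorm g
    rw [Complex.star_def, mul_comm, Complex.mul_conj] at this
    have h2 : Complex.normSq (q g) = 1 := by exact_mod_cast this
    have h3 : ‖q g‖ ^ 2 = 1 := by
      rw [Complex.sq_norm]; exact h2
    nlinarith [norm_nonneg (q g)]
  -- V g * ρ = q g • ρ
  have hVρ : ∀ g : G, ((1 : Matrix G G ℂ) ⊗ₖ (U g : Matrix (Fin n) (Fin n) ℂ)) * ρ
      = q g • ρ := by
    intro g
    rw [hρψ, mul_vecMulVec', heig, _root_.smul_vecMulVec]
  have hqq : ∀ g, q g * star (q g) = 1 := fun g => by rw [mul_comm]; exact hnorm g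
  refine ⟨q, hq1, ?_, ?_⟩
  · -- unitarity of Y
    rw [Matrix.mem_unitaryGroup_iff', Matrix.star_eq_conjTranspose, Matrix.conjTranspose_sum]
    simp only [stdBasis_conjT]
    rw [Finset.sum_mul_sum]
    have hterm : ∀ g h : G,
        Matrix.single (gi * g) (g⁻¹ * gj) (star (star (q g))) *
          Matrix.single (h⁻¹ * gj) (gi * h) (star (q h)) =
        if g = h then Matrix.single (gi * g) (gi * g) (1 : ℂ) else 0 := by
      intro g h
      by_cases hgh : g = h
      · subst hgh
        rw [if_pos rfl, Matrix.single_mul_single_same, star_star, hqq]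
      · rw [if_neg hgh, Matrix.single_mul_single_of_ne]
        intro hc
        exact hgh (inv_injective (mul_right_cancel hc))
    calc (∑ g : G, ∑ h : G,
          Matrix.single (gi * g) (g⁻¹ * gj) (star (star (q g))) *
            Matrix.single (h⁻¹ * gj) (gi * h) (star (q h)))
        = ∑ g : G, Matrix.single (gi * g) (gi * g) (1 : ℂ) := by
          refine Finset.sum_congr rfl fun g _ => ?_
          rw [Finset.sum_congr rfl fun h _ => hterm g h, Finset.sum_ite_eq]
          simp
      _ = ∑ a : G, Matrix.single a a (1 : ℂ) :=
          Fintype.sum_equiv (Equiv.mulLeft gi) _ _ (fun g => rfl)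
      _ = 1 := by
          ext a b
          simp only [Matrix.sum_apply, Matrix.single, Matrix.of_apply, Matrix.one_apply]
          by_cases hab : a = b
          · subst hab; simp [Finset.sum_ite_eq, ite_and]
          · rw [Finset.sum_eq_zero, if_neg hab]
            intro x _
            rw [if_neg]
            rintro ⟨rfl, rfl⟩
            exact hab rfl
  · -- main identity
    set Y : Matrix G G ℂ :=
      ∑ g : G, Matrix.single (g⁻¹ * gj) (gi * g) (star (q g)) with hY
    have hYT : Yᴴ = ∑ g : G, Matrix.single (gi * g) (g⁻¹ * gj) (q g) := by
      rw [hY, Matrix.conjTranspose_sum]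
      refine Finset.sum_congr rfl fun g _ => ?_
      rw [stdBasis_conjT, star_star]
    have h5 : Uqrf U gi gj * ρ = (Yᴴ ⊗ₖ (1 : Matrix (Fin n) (Fin n) ℂ)) * ρ := by
      rw [Uqrf, hYT, sum_kron, Finset.sum_mul, Finset.sum_mul]
      refine Finset.sum_congr rfl fun g _ => ?_
      have e1 : Matrix.single (gi * g) (g⁻¹ * gj) (q g) ⊗ₖ
          (1 : Matrix (Fin n) (Fin n) ℂ) =
          q g • (Matrix.single (g * gi) (gj * g⁻¹) (1 : ℂ) ⊗ₖ
            (1 : Matrix (Fin n) (Fin n) ℂ)) := by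
        rw [mul_comm gi g, mul_comm g⁻¹ gj, ← smul_kronecker, Matrix.smul_single,
          smul_eq_mul, mul_one]
      have e2 : Matrix.single (g * gi) (gj * g⁻¹) (1 : ℂ) ⊗ₖ
          (U g : Matrix (Fin n) (Fin n) ℂ) =
          (Matrix.single (g * gi) (gj * g⁻¹) (1 : ℂ) ⊗ₖ
            (1 : Matrix (Fin n) (Fin n) ℂ)) *
          ((1 : Matrix G G ℂ) ⊗ₖ (U g : Matrix (Fin n) (Fin n) ℂ)) := by
        rw [← mul_kronecker_mul, mul_one, one_mul]
      rw [e1, e2, smul_mul_assoc, mul_assoc, hVρ, mul_smul_comm]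
    have h6 : ρ * (Uqrf U gi gj)ᴴ = ρ * (Yᴴ ⊗ₖ (1 : Matrix (Fin n) (Fin n) ℂ))ᴴ := by
      have := congrArg Matrix.conjTranspose h5
      rwa [Matrix.conjTranspose_mul, Matrix.conjTranspose_mul, hρ.1.eq] at this
    have hkA : (Y ⊗ₖ (1 : Matrix (Fin n) (Fin n) ℂ))ᴴ
        = Yᴴ ⊗ₖ (1 : Matrix (Fin n) (Fin n) ℂ) := by
      rw [kron_conjT_s13, Matrix.conjTranspose_one]
    have hkB : (Yᴴ ⊗ₖ (1 : Matrix (Fin n) (Fin n) ℂ))ᴴ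
        = Y ⊗ₖ (1 : Matrix (Fin n) (Fin n) ℂ) := by
      rw [kron_conjT_s13, Matrix.conjTranspose_one, Matrix.conjTranspose_conjTranspose]
    rw [hkA, ← hkB]
    calc Uqrf U gi gj * ρ * (Uqrf U gi gj)ᴴ
        = Uqrf U gi gj * (ρ * ρ) * (Uqrf U gi gj)ᴴ := by rw [hpure]
      _ = (Uqrf U gi gj * ρ) * (ρ * (Uqrf U gi gj)ᴴ) := by simp only [mul_assoc]
      _ = ((Yᴴ ⊗ₖ (1 : Matrix (Fin n) (Fin n) ℂ)) * ρ) *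
          (ρ * (Yᴴ ⊗ₖ (1 : Matrix (Fin n) (Fin n) ℂ))ᴴ) := by rw [h5, h6]
      _ = (Yᴴ ⊗ₖ (1 : Matrix (Fin n) (Fin n) ℂ)) * (ρ * ρ) *
          (Yᴴ ⊗ₖ (1 : Matrix (Fin n) (Fin n) ℂ))ᴴ := by simp only [mul_assoc]
      _ = (Yᴴ ⊗ₖ (1 : Matrix (Fin n) (Fin n) ℂ)) * ρ *
          (Yᴴ ⊗ₖ (1 : Matrix (Fin n) (Fin n) ℂ))ᴴ := by rw [hpure]
end

section
/- Let H be a Hermitian matrix on ℂ^G ⊗ ℂ^n, let ρ₀ be a density matrix on ℂ^G ⊗ ℂ^n, fix frame orientations g_i, g_j ∈ G, a bilocal unitary X = Y ⊗ Z, and real numbers t₀ < t₁. Define the trajectory ρ(t) := exp(−i(t−t₀)H) ρ₀ exp(i(t−t₀)H) (matrix exponentials) and the imported Hamiltonian H' := X (𝐔 H 𝐔†) X†. Then ρ(t) ∈ 𝒜^X for all t ∈ [t₀, t₁] if and only if both ρ₀ ∈ 𝒜^X and [H − H', ρ(t)] = 0 for all t ∈ [t₀, t₁]. -/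
open Matrix Kronecker
open scoped ComplexOrder

variable {G : Type*} [Fintype G] [CommGroup G] [DecidableEq G] {n : ℕ}

/-- The set `𝒜^X = { f : 𝐔 f 𝐔† = X† f X }` with `X = Y ⊗ Z`. -/
def AX (U : G →* Matrix.unitaryGroup (Fin n) ℂ) (gi gj : G)
    (Y : Matrix G G ℂ) (Z : Matrix (Fin n) (Fin n) ℂ) :
    Set (Matrix (G × Fin n) (G × Fin n) ℂ) :=
  {f | Uqrf U gi gj * f * (Uqrf U gi gj)ᴴ = (Y ⊗ₖ Z)ᴴ * f * (Y ⊗ₖ Z)}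

/-- The Schrödinger trajectory `ρ(t) = e^{-i(t-t₀)H} ρ₀ e^{i(t-t₀)H}`. -/
noncomputable def traj (H ρ₀ : Matrix (G × Fin n) (G × Fin n) ℂ) (t₀ t : ℝ) :
    Matrix (G × Fin n) (G × Fin n) ℂ :=
  NormedSpace.exp ((-Complex.I * ((t : ℂ) - (t₀ : ℂ))) • H) * ρ₀ *
    NormedSpace.exp ((Complex.I * ((t : ℂ) - (t₀ : ℂ))) • H)

namespace QRFaux

open NormedSpace

/-! ### Unitarity of the QRF transformation -/

lemma kron_conjT {m p : Type*} (A : Matrix m m ℂ) (B : Matrix p p ℂ) :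
    (A ⊗ₖ B)ᴴ = Aᴴ ⊗ₖ Bᴴ := by
  ext ⟨a,i⟩ ⟨b,j⟩
  simp [conjTranspose_apply, kroneckerMap_apply, mul_comm]

omit [Fintype G] [CommGroup G] in
lemma stdBasis_conjT (a b : G) :
    (Matrix.single a b (1:ℂ))ᴴ = Matrix.single b a 1 := by
  ext i j
  simp [conjTranspose_apply, Matrix.single, and_comm]

lemma sum_kron {ι m p : Type*} (s : Finset ι) (f : ι → Matrix m m ℂ) (B : Matrix p p ℂ) :
    ∑ x ∈ s, (f x ⊗ₖ B) = (∑ x ∈ s, f x) ⊗ₖ B := by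
  ext ⟨a,i⟩ ⟨b,j⟩
  simp [Matrix.sum_apply, kroneckerMap_apply, Finset.sum_mul]

lemma sum_diag_one (gi : G) : ∑ g : G, Matrix.single (g * gi) (g * gi) (1:ℂ) = 1 := by
  ext a b
  rw [Matrix.sum_apply, Finset.sum_eq_single (a * gi⁻¹)]
  · by_cases h : a = b <;> simp [Matrix.single, Matrix.one_apply, h]
  · intro g _ hg
    have h1 : g * gi ≠ a := fun hc => hg (by rw [← hc]; group)
    simp [Matrix.single, h1]
  · simp

lemma Uqrf_mul_conjT (U : G →* Matrix.unitaryGroup (Fin n) ℂ) (gi gj : G) :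
    Uqrf U gi gj * (Uqrf U gi gj)ᴴ = 1 := by
  unfold Uqrf
  rw [conjTranspose_sum, Finset.sum_mul_sum]
  have key : ∀ g h : G,
      (Matrix.single (g * gi) (gj * g⁻¹) (1 : ℂ) ⊗ₖ (U g : Matrix (Fin n) (Fin n) ℂ)) *
        (Matrix.single (h * gi) (gj * h⁻¹) (1 : ℂ) ⊗ₖ (U h : Matrix (Fin n) (Fin n) ℂ))ᴴ =
      if h = g then Matrix.single (g * gi) (g * gi) (1:ℂ) ⊗ₖ
        (1 : Matrix (Fin n) (Fin n) ℂ) else 0 := by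
    intro g h
    rw [kron_conjT, stdBasis_conjT, ← mul_kronecker_mul]
    by_cases hgh : h = g
    · subst hgh
      rw [if_pos rfl, Matrix.single_mul_single_same, mul_one]
      have h2 := (U h).2
      rw [Matrix.mem_unitaryGroup_iff, Matrix.star_eq_conjTranspose] at h2
      rw [h2]
    · rw [if_neg hgh, Matrix.single_mul_single_of_ne, Matrix.zero_kronecker]
      intro hc
      exact hgh (inv_injective (mul_left_cancel hc)).symm
  simp_rw [key]
  simp_rw [Finset.sum_ite_eq', Finset.mem_univ, if_pos]
  rw [sum_kron, sum_diag_one, Matrix.one_kronecker_one]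

/-! ### Matrix exponential calculus -/

section deriv
variable {m : Type*} [Fintype m] [DecidableEq m]

attribute [local instance] Matrix.linftyOpNormedRing Matrix.linftyOpNormedAlgebra

/-- `e^{c (t - t₀) H}`. -/
noncomputable def Efun (c : ℂ) (H : Matrix m m ℂ) (t₀ : ℝ) (t : ℝ) : Matrix m m ℂ :=
  exp ((c * ((t : ℂ) - (t₀ : ℂ))) • H)

lemma Efun_eq (c : ℂ) (H : Matrix m m ℂ) (t₀ t : ℝ) :
    Efun c H t₀ t = exp ((t - t₀) • (c • H)) := by
  rw [Efun]
  rw [← smul_assoc, Complex.real_smul]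
  congr 2
  push_cast; ring

lemma hasDerivAt_Efun (c : ℂ) (H : Matrix m m ℂ) (t₀ t : ℝ) :
    HasDerivAt (Efun c H t₀) (c • (Efun c H t₀ t * H)) t := by
  have h1 : HasDerivAt (fun u : ℝ => exp (u • (c • H)))
      (exp ((t - t₀) • (c • H)) * (c • H)) (t - t₀) :=
    hasDerivAt_exp_smul_const (c • H) (t - t₀)
  have h2 : HasDerivAt (fun s : ℝ => s - t₀) 1 t := (hasDerivAt_id t).sub_const t₀
  have h3 := HasDerivAt.scomp (x := t) h1 h2
  simp only [one_smul] at h3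
  have hf : (Efun c H t₀) = (fun u : ℝ => exp (u • (c • H))) ∘ (fun s : ℝ => s - t₀) := by
    funext s; simp [Efun_eq, Function.comp]
  have h4 : c • (Efun c H t₀ t * H) = exp ((t - t₀) • (c • H)) * (c • H) := by
    rw [Efun_eq, mul_smul_comm]
  rw [h4, hf]
  exact h3

lemma Efun_t₀ (c : ℂ) (H : Matrix m m ℂ) (t₀ : ℝ) : Efun c H t₀ t₀ = 1 := by
  simp [Efun, exp_zero]

lemma Efun_commute (c : ℂ) (H : Matrix m m ℂ) (t₀ t : ℝ) :
    H * Efun c H t₀ t = Efun c H t₀ t * H := by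
  have h : Commute H (Efun c H t₀ t) :=
    ((Commute.refl H).smul_right _).exp_right
  exact h

lemma Efun_mul_neg (c : ℂ) (H : Matrix m m ℂ) (t₀ t : ℝ) :
    Efun c H t₀ t * Efun (-c) H t₀ t = 1 := by
  rw [Efun, Efun, neg_mul, neg_smul, ← Matrix.exp_add_of_commute ((c * ((t : ℂ) - (t₀ : ℂ))) • H) _
      ((Commute.refl _).neg_right),
    add_neg_cancel, exp_zero]

lemma conj_exp (V A : Matrix m m ℂ) (hV : V * Vᴴ = 1) :
    V * exp A * Vᴴ = exp (V * A * Vᴴ) := by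
  have hu : IsUnit V := IsUnit.of_mul_eq_one _ hV
  have hinv : V⁻¹ = Vᴴ := Matrix.inv_eq_right_inv hV
  rw [← hinv, Matrix.exp_conj V A hu]

lemma conj_Efun (V : Matrix m m ℂ) (hV : V * Vᴴ = 1) (c : ℂ) (H : Matrix m m ℂ) (t₀ t : ℝ) :
    V * Efun c H t₀ t * Vᴴ = Efun c (V * H * Vᴴ) t₀ t := by
  rw [Efun, Efun, conj_exp _ _ hV, mul_smul_comm, smul_mul_assoc]

/-- General-type version of `traj`. -/
noncomputable def trajm (H ρ₀ : Matrix m m ℂ) (t₀ t : ℝ) : Matrix m m ℂ :=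
  Efun (-Complex.I) H t₀ t * ρ₀ * Efun Complex.I H t₀ t

lemma trajm_t₀ (H ρ₀ : Matrix m m ℂ) (t₀ : ℝ) : trajm H ρ₀ t₀ t₀ = ρ₀ := by
  rw [trajm, Efun_t₀, Efun_t₀, one_mul, mul_one]

lemma conj_trajm (V : Matrix m m ℂ) (hV : V * Vᴴ = 1) (hV' : Vᴴ * V = 1)
    (H ρ₀ : Matrix m m ℂ) (t₀ t : ℝ) :
    V * trajm H ρ₀ t₀ t * Vᴴ = trajm (V * H * Vᴴ) (V * ρ₀ * Vᴴ) t₀ t := by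
  rw [trajm, trajm, ← conj_Efun V hV, ← conj_Efun V hV]
  have e : V * Efun (-Complex.I) H t₀ t * Vᴴ * (V * ρ₀ * Vᴴ) * (V * Efun Complex.I H t₀ t * Vᴴ)
      = V * Efun (-Complex.I) H t₀ t * (Vᴴ * V) * ρ₀ * ((Vᴴ * V) *
        (Efun Complex.I H t₀ t * Vᴴ)) := by
    simp only [mul_assoc]
  rw [e, hV', mul_one, one_mul]
  simp only [mul_assoc]

lemma hasDerivAt_trajm (H ρ₀ : Matrix m m ℂ) (t₀ t : ℝ) :
    HasDerivAt (fun s => trajm H ρ₀ t₀ s)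
      (Complex.I • (trajm H ρ₀ t₀ t * H) - Complex.I • (H * trajm H ρ₀ t₀ t)) t := by
  have d1 := hasDerivAt_Efun (-Complex.I) H t₀ t
  have d2 := hasDerivAt_Efun Complex.I H t₀ t
  have h := (d1.mul_const ρ₀).mul d2
  refine h.congr_deriv ?_
  symm
  simp only [trajm, neg_smul, neg_mul, smul_mul_assoc, mul_smul_comm, mul_assoc]
  rw [← mul_assoc (Efun (-Complex.I) H t₀ t) H, ← Efun_commute (-Complex.I), mul_assoc]
  abel

lemma hasDerivAt_F (H H' ρ₀ : Matrix m m ℂ) (t₀ t : ℝ) :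
    HasDerivAt (fun s => Efun Complex.I H' t₀ s * trajm H ρ₀ t₀ s * Efun (-Complex.I) H' t₀ s)
      (Complex.I • (Efun Complex.I H' t₀ t *
        ((H' - H) * trajm H ρ₀ t₀ t - trajm H ρ₀ t₀ t * (H' - H)) *
        Efun (-Complex.I) H' t₀ t)) t := by
  have dA := hasDerivAt_Efun Complex.I H' t₀ t
  have dT := hasDerivAt_trajm H ρ₀ t₀ t
  have dB := hasDerivAt_Efun (-Complex.I) H' t₀ t
  have h := (dA.mul dT).mul dB
  refine h.congr_deriv ?_
  symm
  simp only [neg_smul, neg_mul, mul_neg, smul_mul_assoc, mul_smul_comm, sub_mul, mul_sub,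
    smul_sub, add_mul, mul_add, mul_assoc, Pi.mul_apply]
  rw [← Efun_commute (-Complex.I) H']
  abel

/-- The key dynamical equivalence, for an abstract unitary `V`. -/
lemma key (V : Matrix m m ℂ) (hV1 : V * Vᴴ = 1) (hV2 : Vᴴ * V = 1)
    (H ρ₀ : Matrix m m ℂ) (t₀ t₁ : ℝ) (ht : t₀ < t₁) :
    (∀ t ∈ Set.Icc t₀ t₁, V * trajm H ρ₀ t₀ t * Vᴴ = trajm H ρ₀ t₀ t) ↔
      (V * ρ₀ * Vᴴ = ρ₀ ∧ ∀ t ∈ Set.Icc t₀ t₁,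
        (H - V * H * Vᴴ) * trajm H ρ₀ t₀ t = trajm H ρ₀ t₀ t * (H - V * H * Vᴴ)) := by
  constructor
  · intro hinv
    have h0 : V * ρ₀ * Vᴴ = ρ₀ := by
      have := hinv t₀ ⟨le_refl t₀, ht.le⟩
      rwa [trajm_t₀] at this
    refine ⟨h0, fun t htI => ?_⟩
    have hg : ∀ s ∈ Set.Icc t₀ t₁, trajm (V*H*Vᴴ) ρ₀ t₀ s = trajm H ρ₀ t₀ s := by
      intro s hs
      calc trajm (V*H*Vᴴ) ρ₀ t₀ s = trajm (V*H*Vᴴ) (V*ρ₀*Vᴴ) t₀ s := by rw [h0]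
        _ = V * trajm H ρ₀ t₀ s * Vᴴ := (conj_trajm V hV1 hV2 H ρ₀ t₀ s).symm
        _ = trajm H ρ₀ t₀ s := hinv s hs
    have hdf := hasDerivAt_trajm H ρ₀ t₀ t
    have hdg := hasDerivAt_trajm (V*H*Vᴴ) ρ₀ t₀ t
    have h1 : HasDerivWithinAt (fun s => trajm H ρ₀ t₀ s)
        (Complex.I • (trajm H ρ₀ t₀ t * H) - Complex.I • (H * trajm H ρ₀ t₀ t))
        (Set.Icc t₀ t₁) t := hdf.hasDerivWithinAt
    have h2 : HasDerivWithinAt (fun s => trajm H ρ₀ t₀ s)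
        (Complex.I • (trajm (V*H*Vᴴ) ρ₀ t₀ t * (V*H*Vᴴ)) -
          Complex.I • ((V*H*Vᴴ) * trajm (V*H*Vᴴ) ρ₀ t₀ t)) (Set.Icc t₀ t₁) t :=
      hdg.hasDerivWithinAt.congr (fun y hy => (hg y hy).symm) (hg t htI).symm
    have heq := (uniqueDiffOn_Icc ht t htI).eq_deriv _ h1 h2
    rw [hg t htI] at heq
    have hc : trajm H ρ₀ t₀ t * H - H * trajm H ρ₀ t₀ t
        = trajm H ρ₀ t₀ t * (V*H*Vᴴ) - (V*H*Vᴴ) * trajm H ρ₀ t₀ t := by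
      apply smul_right_injective _ Complex.I_ne_zero
      simpa [smul_sub] using heq
    rw [sub_mul, mul_sub, sub_eq_sub_iff_add_eq_add]
    rw [sub_eq_sub_iff_add_eq_add] at hc
    exact (add_comm _ _).trans hc.symm
  · rintro ⟨h0, hcomm⟩ t htI
    have hzero : ∀ s ∈ Set.Icc t₀ t₁,
        ((V*H*Vᴴ) - H) * trajm H ρ₀ t₀ s - trajm H ρ₀ t₀ s * ((V*H*Vᴴ) - H) = 0 := by
      intro s hs
      have h1 := hcomm s hs
      have h2 : ((V*H*Vᴴ) - H) * trajm H ρ₀ t₀ s = trajm H ρ₀ t₀ s * ((V*H*Vᴴ) - H) := by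
        rw [← neg_sub H (V*H*Vᴴ), neg_mul, mul_neg, h1]
      rw [h2, sub_self]
    have hcont : ContinuousOn (fun s => Efun Complex.I (V*H*Vᴴ) t₀ s * trajm H ρ₀ t₀ s *
        Efun (-Complex.I) (V*H*Vᴴ) t₀ s) (Set.Icc t₀ t₁) := fun x _ =>
      ((hasDerivAt_F H (V*H*Vᴴ) ρ₀ t₀ x).continuousAt).continuousWithinAt
    have hderiv : ∀ x ∈ Set.Ico t₀ t₁, HasDerivWithinAt
        (fun s => Efun Complex.I (V*H*Vᴴ) t₀ s * trajm H ρ₀ t₀ s *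
          Efun (-Complex.I) (V*H*Vᴴ) t₀ s) 0 (Set.Ici x) x := by
      intro x hx
      have hd := hasDerivAt_F H (V*H*Vᴴ) ρ₀ t₀ x
      rw [hzero x (Set.Ico_subset_Icc_self hx), mul_zero, zero_mul, smul_zero] at hd
      exact hd.hasDerivWithinAt
    have hconst := constant_of_has_deriv_right_zero hcont hderiv t htI
    rw [Efun_t₀, trajm_t₀, Efun_t₀, one_mul, mul_one] at hconst
    rw [conj_trajm V hV1 hV2, h0, trajm]
    conv_lhs => rw [← hconst]
    have hBA : Efun (-Complex.I) (V*H*Vᴴ) t₀ t * Efun Complex.I (V*H*Vᴴ) t₀ t = 1 := by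
      have h4 := Efun_mul_neg (-Complex.I) (V*H*Vᴴ) t₀ t
      rwa [neg_neg] at h4
    calc Efun (-Complex.I) (V*H*Vᴴ) t₀ t * (Efun Complex.I (V*H*Vᴴ) t₀ t * trajm H ρ₀ t₀ t *
          Efun (-Complex.I) (V*H*Vᴴ) t₀ t) * Efun Complex.I (V*H*Vᴴ) t₀ t
        = (Efun (-Complex.I) (V*H*Vᴴ) t₀ t * Efun Complex.I (V*H*Vᴴ) t₀ t) * trajm H ρ₀ t₀ t *
          ((Efun (-Complex.I) (V*H*Vᴴ) t₀ t * Efun Complex.I (V*H*Vᴴ) t₀ t)) := by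
          simp only [mul_assoc]
      _ = trajm H ρ₀ t₀ t := by rw [hBA, one_mul, mul_one]

end deriv

end QRFaux

/-- TPS-invariant trajectories. The dynamical trajectory generated by a
Hermitian `H` stays in `𝒜^X` over `[t₀,t₁]` iff the initial state lies in `𝒜^X` and the
trajectory commutes with `H - H'`, where `H' = X (𝐔 H 𝐔†) X†` is the imported
Hamiltonian. -/
theorem trajectory_in_AX_iff (hn : 1 ≤ n)
    (U : G →* Matrix.unitaryGroup (Fin n) ℂ) (gi gj : G)
    (Y : Matrix G G ℂ) (hY : Y ∈ Matrix.unitaryGroup G ℂ)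
    (Z : Matrix (Fin n) (Fin n) ℂ) (hZ : Z ∈ Matrix.unitaryGroup (Fin n) ℂ)
    (H : Matrix (G × Fin n) (G × Fin n) ℂ) (hH : H.IsHermitian)
    (ρ₀ : Matrix (G × Fin n) (G × Fin n) ℂ)
    (hρ₀ : ρ₀.PosSemidef) (htr : ρ₀.trace = 1)
    (t₀ t₁ : ℝ) (ht : t₀ < t₁) :
    (∀ t ∈ Set.Icc t₀ t₁, traj H ρ₀ t₀ t ∈ AX U gi gj Y Z) ↔
      (ρ₀ ∈ AX U gi gj Y Z ∧
        ∀ t ∈ Set.Icc t₀ t₁,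
          (H - (Y ⊗ₖ Z) * (Uqrf U gi gj * H * (Uqrf U gi gj)ᴴ) * (Y ⊗ₖ Z)ᴴ) *
              traj H ρ₀ t₀ t =
            traj H ρ₀ t₀ t *
              (H - (Y ⊗ₖ Z) * (Uqrf U gi gj * H * (Uqrf U gi gj)ᴴ) * (Y ⊗ₖ Z)ᴴ)) := by
  have hY' : Y * Yᴴ = 1 := by
    rw [Matrix.mem_unitaryGroup_iff, Matrix.star_eq_conjTranspose] at hY; exact hY
  have hZ' : Z * Zᴴ = 1 := by
    rw [Matrix.mem_unitaryGroup_iff, Matrix.star_eq_conjTranspose] at hZ; exact hZ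
  have hXX : (Y ⊗ₖ Z) * (Y ⊗ₖ Z)ᴴ = 1 := by
    rw [QRFaux.kron_conjT, ← Matrix.mul_kronecker_mul, hY', hZ', Matrix.one_kronecker_one]
  have hXX' : (Y ⊗ₖ Z)ᴴ * (Y ⊗ₖ Z) = 1 := mul_eq_one_comm.mp hXX
  have hUU : Uqrf U gi gj * (Uqrf U gi gj)ᴴ = 1 := QRFaux.Uqrf_mul_conjT U gi gj
  have hV1 : ((Y ⊗ₖ Z) * Uqrf U gi gj) * ((Y ⊗ₖ Z) * Uqrf U gi gj)ᴴ = 1 := by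
    rw [conjTranspose_mul]
    calc (Y ⊗ₖ Z) * Uqrf U gi gj * ((Uqrf U gi gj)ᴴ * (Y ⊗ₖ Z)ᴴ)
        = (Y ⊗ₖ Z) * (Uqrf U gi gj * (Uqrf U gi gj)ᴴ) * (Y ⊗ₖ Z)ᴴ := by
          simp only [mul_assoc]
      _ = 1 := by rw [hUU, mul_one, hXX]
  have hV2 := mul_eq_one_comm.mp hV1
  have hmem : ∀ f : Matrix (G × Fin n) (G × Fin n) ℂ,
      f ∈ AX U gi gj Y Z ↔
        ((Y ⊗ₖ Z) * Uqrf U gi gj) * f * ((Y ⊗ₖ Z) * Uqrf U gi gj)ᴴ = f := by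
    intro f
    constructor
    · intro hf
      have h1 : Uqrf U gi gj * f * (Uqrf U gi gj)ᴴ = (Y ⊗ₖ Z)ᴴ * f * (Y ⊗ₖ Z) := hf
      rw [conjTranspose_mul]
      calc (Y ⊗ₖ Z) * Uqrf U gi gj * f * ((Uqrf U gi gj)ᴴ * (Y ⊗ₖ Z)ᴴ)
          = (Y ⊗ₖ Z) * (Uqrf U gi gj * f * (Uqrf U gi gj)ᴴ) * (Y ⊗ₖ Z)ᴴ := by
            simp only [mul_assoc]
        _ = (Y ⊗ₖ Z) * ((Y ⊗ₖ Z)ᴴ * f * (Y ⊗ₖ Z)) * (Y ⊗ₖ Z)ᴴ := by rw [h1]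
        _ = ((Y ⊗ₖ Z) * (Y ⊗ₖ Z)ᴴ) * f * ((Y ⊗ₖ Z) * (Y ⊗ₖ Z)ᴴ) := by
            simp only [mul_assoc]
        _ = f := by rw [hXX, one_mul, mul_one]
    · intro hf
      show Uqrf U gi gj * f * (Uqrf U gi gj)ᴴ = (Y ⊗ₖ Z)ᴴ * f * (Y ⊗ₖ Z)
      have h2 : (Y ⊗ₖ Z) * (Uqrf U gi gj * f * (Uqrf U gi gj)ᴴ) * (Y ⊗ₖ Z)ᴴ = f := by
        calc (Y ⊗ₖ Z) * (Uqrf U gi gj * f * (Uqrf U gi gj)ᴴ) * (Y ⊗ₖ Z)ᴴ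
            = ((Y ⊗ₖ Z) * Uqrf U gi gj) * f * ((Y ⊗ₖ Z) * Uqrf U gi gj)ᴴ := by
              rw [conjTranspose_mul]; simp only [mul_assoc]
          _ = f := hf
      calc Uqrf U gi gj * f * (Uqrf U gi gj)ᴴ
          = ((Y ⊗ₖ Z)ᴴ * (Y ⊗ₖ Z)) * (Uqrf U gi gj * f * (Uqrf U gi gj)ᴴ) *
            ((Y ⊗ₖ Z)ᴴ * (Y ⊗ₖ Z)) := by rw [hXX', one_mul, mul_one]
        _ = (Y ⊗ₖ Z)ᴴ * ((Y ⊗ₖ Z) * (Uqrf U gi gj * f * (Uqrf U gi gj)ᴴ) * (Y ⊗ₖ Z)ᴴ) *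
            (Y ⊗ₖ Z) := by simp only [mul_assoc]
        _ = (Y ⊗ₖ Z)ᴴ * f * (Y ⊗ₖ Z) := by rw [h2]
  have hH' : (Y ⊗ₖ Z) * (Uqrf U gi gj * H * (Uqrf U gi gj)ᴴ) * (Y ⊗ₖ Z)ᴴ
      = ((Y ⊗ₖ Z) * Uqrf U gi gj) * H * ((Y ⊗ₖ Z) * Uqrf U gi gj)ᴴ := by
    rw [conjTranspose_mul]; simp only [mul_assoc]
  have hkey := QRFaux.key ((Y ⊗ₖ Z) * Uqrf U gi gj) hV1 hV2 H ρ₀ t₀ t₁ ht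
  constructor
  · intro h
    obtain ⟨c0, cc⟩ := hkey.mp (fun t htI => (hmem _).mp (h t htI))
    refine ⟨(hmem ρ₀).mpr c0, fun t htI => ?_⟩
    rw [hH']
    exact cc t htI
  · rintro ⟨h0, hcomm⟩ t htI
    refine (hmem _).mpr ?_
    exact hkey.mpr ⟨(hmem ρ₀).mp h0, fun s hs => by
      rw [← hH']; exact hcomm s hs⟩ t htI
end
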